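/- arXiv:2603.28748 — 5 statements merged into one kernel-verified Lean document; each statement's English description precedes it below -/
import Mathlib

section
/- For every integer t ≥ 6, the odd Hadwiger number of the direct product of the complete graphs K_t and K_3 equals t + 2: oh(K_t × K_3) = t + 2. -/
open SimpleGraph

/-- `H` is an odd minor of `G`: there are pairwise vertex-disjoint subtrees of `G`, one for
each vertex of `H`, and a 2-colouring of the vertices which is proper on each tree, such that
for every edge of `H` there is a monochromatic edge of `G` between the corresponding trees. -/
def IsOddMinorOf {W V : Type*} (H : SimpleGraph W) (G : SimpleGraph V) : Prop :=
  ∃ (T : W → G.Subgraph) (c : V → Fin 2),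
    (∀ w, (T w).coe.IsTree) ∧
    (Pairwise fun w w' => Disjoint (T w).verts (T w').verts) ∧
    (∀ w, ∀ x y, (T w).Adj x y → c x ≠ c y) ∧
    (∀ w w', H.Adj w w' →
      ∃ x y, x ∈ (T w).verts ∧ y ∈ (T w').verts ∧ G.Adj x y ∧ c x = c y)

/-- The odd Hadwiger number of `G`: the largest `r` such that `K_r` is an odd minor of `G`. -/
noncomputable def oddHadwiger {V : Type*} [Fintype V] (G : SimpleGraph V) : ℕ :=
  sSup {r : ℕ | IsOddMinorOf (⊤ : SimpleGraph (Fin r)) G}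

/-- The Cartesian product `G □ H`. -/
def cartProd {α β : Type*} (G : SimpleGraph α) (H : SimpleGraph β) : SimpleGraph (α × β) where
  Adj x y := (x.1 = y.1 ∧ H.Adj x.2 y.2) ∨ (x.2 = y.2 ∧ G.Adj x.1 y.1)
  symm := by
    constructor
    rintro x y (⟨h1, h2⟩ | ⟨h1, h2⟩)
    · exact Or.inl ⟨h1.symm, h2.symm⟩
    · exact Or.inr ⟨h1.symm, h2.symm⟩
  loopless := by
    constructor
    rintro x (⟨_, h⟩ | ⟨_, h⟩)
    · exact H.irrefl h
    · exact G.irrefl h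

/-- The strong product `G ⊠ H`. -/
def strongProd {α β : Type*} (G : SimpleGraph α) (H : SimpleGraph β) : SimpleGraph (α × β) where
  Adj x y := (x.1 = y.1 ∧ H.Adj x.2 y.2) ∨ (x.2 = y.2 ∧ G.Adj x.1 y.1) ∨
    (G.Adj x.1 y.1 ∧ H.Adj x.2 y.2)
  symm := by
    constructor
    rintro x y (⟨h1, h2⟩ | ⟨h1, h2⟩ | ⟨h1, h2⟩)
    · exact Or.inl ⟨h1.symm, h2.symm⟩
    · exact Or.inr (Or.inl ⟨h1.symm, h2.symm⟩)
    · exact Or.inr (Or.inr ⟨h1.symm, h2.symm⟩)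
  loopless := by
    constructor
    rintro x (⟨_, h⟩ | ⟨_, h⟩ | ⟨h, _⟩)
    · exact H.irrefl h
    · exact G.irrefl h
    · exact G.irrefl h

/-- The lexicographic product `G ∘ H`. -/
def lexProd {α β : Type*} (G : SimpleGraph α) (H : SimpleGraph β) : SimpleGraph (α × β) where
  Adj x y := G.Adj x.1 y.1 ∨ (x.1 = y.1 ∧ H.Adj x.2 y.2)
  symm := by
    constructor
    rintro x y (h | ⟨h1, h2⟩)
    · exact Or.inl h.symm
    · exact Or.inr ⟨h1.symm, h2.symm⟩
  loopless := by
    constructor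
    rintro x (h | ⟨_, h⟩)
    · exact G.irrefl h
    · exact H.irrefl h

/-- The direct (tensor) product `G × H`. -/
def dirProd {α β : Type*} (G : SimpleGraph α) (H : SimpleGraph β) : SimpleGraph (α × β) where
  Adj x y := G.Adj x.1 y.1 ∧ H.Adj x.2 y.2
  symm := by
    constructor
    rintro x y ⟨h1, h2⟩
    exact ⟨h1.symm, h2.symm⟩
  loopless := by
    constructor
    rintro x ⟨h, _⟩
    exact G.irrefl h

lemma coe_isAcyclic_of_le_two_edges {V : Type*} {G : SimpleGraph V} (H : G.Subgraph)
    (e1 e2 : Sym2 V) (h : ∀ x y, H.Adj x y → s(x,y) = e1 ∨ s(x,y) = e2) :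
    H.coe.IsAcyclic := by
  classical
  intro v p hp
  have hlen : 3 ≤ p.length := hp.three_le_length
  have hnd : p.edges.Nodup := hp.edges_nodup
  set f : Sym2 H.verts → Sym2 V := Sym2.map Subtype.val with hf
  have hfi : Function.Injective f := Sym2.map.injective Subtype.val_injective
  have hnd2 : (p.edges.map f).Nodup := hnd.map hfi
  have hsub : ∀ e ∈ p.edges.map f, e ∈ ({e1, e2} : Finset (Sym2 V)) := by
    intro e he
    rw [List.mem_map] at he
    obtain ⟨e', he', rfl⟩ := he
    have := p.edges_subset_edgeSet he'
    induction e' with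
    | _ a b =>
      rw [SimpleGraph.mem_edgeSet] at this
      have := h a.1 b.1 this
      simpa [hf, Finset.mem_insert] using this
  have hle : (p.edges.map f).length ≤ 2 := by
    have h1 : (p.edges.map f).toFinset ⊆ {e1, e2} := fun e he => hsub e (List.mem_toFinset.mp he)
    calc (p.edges.map f).length = (p.edges.map f).toFinset.card :=
          (List.toFinset_card_of_nodup hnd2).symm
      _ ≤ ({e1, e2} : Finset (Sym2 V)).card := Finset.card_le_card h1
      _ ≤ 2 := Finset.card_insert_le _ _ |>.trans (by simp)
  rw [List.length_map, p.length_edges] at hle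
  omega

namespace OddLower

/-- colour-0 endpoints of the six matching edges, in `K_4 × K_3` coordinates -/
def Xe : Fin 6 → Fin 4 × Fin 3 := ![(0,0),(1,0),(2,1),(3,1),(3,2),(1,2)]
/-- colour-1 endpoints -/
def Ye : Fin 6 → Fin 4 × Fin 3 := ![(1,1),(2,2),(3,0),(0,2),(2,0),(0,1)]
/-- colour table on the last four columns -/
def ge : Fin 4 → Fin 3 → Fin 2 := ![![0,1,1],![0,1,0],![1,0,1],![1,0,0]]

lemma ge_Xe : ∀ j, ge (Xe j).1 (Xe j).2 = 0 := by decide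
lemma ge_Ye : ∀ j, ge (Ye j).1 (Ye j).2 = 1 := by decide
lemma Xe_ne_Ye : ∀ j, (Xe j).1 ≠ (Ye j).1 ∧ (Xe j).2 ≠ (Ye j).2 := by decide
lemma distinct_XY : ∀ j j', j ≠ j' →
    Xe j ≠ Xe j' ∧ Xe j ≠ Ye j' ∧ Ye j ≠ Ye j' ∧ Ye j ≠ Xe j' := by decide
lemma conn_XY : ∀ j j', j ≠ j' →
    ((Xe j).1 ≠ (Xe j').1 ∧ (Xe j).2 ≠ (Xe j').2) ∨
    ((Ye j).1 ≠ (Ye j').1 ∧ (Ye j).2 ≠ (Ye j').2) := by decide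

variable {t : ℕ}

/-- the ambient graph -/
abbrev KG (t : ℕ) : SimpleGraph (Fin t × Fin 3) :=
  dirProd (⊤ : SimpleGraph (Fin t)) (⊤ : SimpleGraph (Fin 3))

lemma KG_adj {a b : Fin t × Fin 3} (h1 : a.1 ≠ b.1) (h2 : a.2 ≠ b.2) : (KG t).Adj a b :=
  ⟨h1, h2⟩

lemma KG_adj_iff {a b : Fin t × Fin 3} : (KG t).Adj a b ↔ a.1 ≠ b.1 ∧ a.2 ≠ b.2 := by
  constructor
  · rintro ⟨h1, h2⟩; exact ⟨h1.ne, h2.ne⟩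
  · rintro ⟨h1, h2⟩; exact ⟨h1, h2⟩

/-- embedding of the four special columns -/
def embC (ht : 6 ≤ t) (k : Fin 4) : Fin t := ⟨t - 4 + k.1, by have := k.isLt; omega⟩

lemma embC_inj (ht : 6 ≤ t) {k k' : Fin 4} (h : k ≠ k') : embC ht k ≠ embC ht k' := by
  intro hc
  apply h
  have := congrArg Fin.val hc
  simp only [embC] at this
  exact Fin.ext (by omega)

def xv (ht : 6 ≤ t) (j : Fin 6) : Fin t × Fin 3 := (embC ht (Xe j).1, (Xe j).2)
def yv (ht : 6 ≤ t) (j : Fin 6) : Fin t × Fin 3 := (embC ht (Ye j).1, (Ye j).2)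

lemma mod_facts (ht : 6 ≤ t) (i : ℕ) (hi : i < t - 4) :
    (i+1) % (t-4) < t - 4 ∧ (i+1) % (t-4) ≠ i ∧
    ((i+1) % (t-4) = if i + 1 = t - 4 then 0 else i + 1) := by
  by_cases h : i + 1 = t - 4
  · rw [h, Nat.mod_self]
    simp [h]
    omega
  · have hlt : i + 1 < t - 4 := by omega
    rw [Nat.mod_eq_of_lt hlt]
    simp [h]
    omega

def pA (i : ℕ) (hi : i < t - 4) : Fin t × Fin 3 := (⟨i, by omega⟩, 0)
def pB (ht : 6 ≤ t) (i : ℕ) (hi : i < t - 4) : Fin t × Fin 3 :=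
  (⟨if i + 1 = t - 4 then 0 else i + 1, by split_ifs <;> omega⟩, 1)
def pD (i : ℕ) (hi : i < t - 4) : Fin t × Fin 3 := (⟨i, by omega⟩, 2)

lemma adj_AB (ht : 6 ≤ t) (i : ℕ) (hi : i < t - 4) :
    (KG t).Adj (pA i hi) (pB ht i hi) :=
  KG_adj (by
    simp only [pA, pB, ne_eq, Fin.mk.injEq]
    split_ifs <;> omega) (by simp [pA, pB])

lemma adj_BD (ht : 6 ≤ t) (i : ℕ) (hi : i < t - 4) :
    (KG t).Adj (pB ht i hi) (pD i hi) :=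
  KG_adj (by
    simp only [pB, pD, ne_eq, Fin.mk.injEq]
    split_ifs <;> omega) (by simp [pB, pD])

lemma adj_xy (ht : 6 ≤ t) (j : Fin 6) : (KG t).Adj (xv ht j) (yv ht j) :=
  KG_adj (embC_inj ht (Xe_ne_Ye j).1) (Xe_ne_Ye j).2

def pathTree (ht : 6 ≤ t) (i : ℕ) (hi : i < t - 4) : (KG t).Subgraph :=
  SimpleGraph.subgraphOfAdj _ (adj_AB ht i hi) ⊔ SimpleGraph.subgraphOfAdj _ (adj_BD ht i hi)

def edgeTree (ht : 6 ≤ t) (j : Fin 6) : (KG t).Subgraph :=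
  SimpleGraph.subgraphOfAdj _ (adj_xy ht j)

lemma pathTree_verts (ht : 6 ≤ t) (i : ℕ) (hi : i < t - 4) :
    (pathTree ht i hi).verts = {pA i hi, pB ht i hi, pD i hi} := by
  ext u
  simp [pathTree, Subgraph.verts_sup]
  tauto

lemma edgeTree_verts (ht : 6 ≤ t) (j : Fin 6) :
    (edgeTree ht j).verts = {xv ht j, yv ht j} := by
  simp [edgeTree]

lemma pathTree_isTree (ht : 6 ≤ t) (i : ℕ) (hi : i < t - 4) :
    (pathTree ht i hi).coe.IsTree := by
  constructor
  · exact (Subgraph.connected_sup (Subgraph.subgraphOfAdj_connected (adj_AB ht i hi)).preconnected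
      (Subgraph.subgraphOfAdj_connected (adj_BD ht i hi)).preconnected
      ⟨pB ht i hi, by rw [Subgraph.verts_inf]; constructor <;> simp⟩).coe
  · apply coe_isAcyclic_of_le_two_edges _ s(pA i hi, pB ht i hi) s(pB ht i hi, pD i hi)
    intro x y h
    rw [pathTree, Subgraph.sup_adj] at h
    rcases h with h | h
    · exact Or.inl (Eq.symm h)
    · exact Or.inr (Eq.symm h)

lemma edgeTree_isTree (ht : 6 ≤ t) (j : Fin 6) :
    (edgeTree ht j).coe.IsTree := by
  constructor
  · exact (Subgraph.subgraphOfAdj_connected (adj_xy ht j)).coe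
  · apply coe_isAcyclic_of_le_two_edges _ s(xv ht j, yv ht j) s(xv ht j, yv ht j)
    intro x y h
    exact Or.inl (Eq.symm h)

/-- the colouring -/
def col (ht : 6 ≤ t) (v : Fin t × Fin 3) : Fin 2 :=
  if h : (v.1 : ℕ) < t - 4 then (if v.2 = 1 then 0 else 1)
  else ge ⟨(v.1 : ℕ) - (t - 4), by have := v.1.isLt; omega⟩ v.2

lemma col_pA (ht : 6 ≤ t) (i : ℕ) (hi : i < t - 4) : col ht (pA i hi) = 1 := by
  simp [col, pA, hi]
lemma col_pB (ht : 6 ≤ t) (i : ℕ) (hi : i < t - 4) : col ht (pB ht i hi) = 0 := by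
  have hlt : ((pB ht i hi).1 : ℕ) < t - 4 := by
    simp only [pB, Fin.val_mk]
    split_ifs <;> omega
  unfold col
  rw [dif_pos hlt]
  simp [pB]
lemma col_pD (ht : 6 ≤ t) (i : ℕ) (hi : i < t - 4) : col ht (pD i hi) = 1 := by
  simp [col, pD, hi]

lemma col_xv (ht : 6 ≤ t) (j : Fin 6) : col ht (xv ht j) = 0 := by
  have h1 : ¬ ((xv ht j).1 : ℕ) < t - 4 := by
    simp only [xv, embC]
    omega
  rw [col, dif_neg h1]
  have h2 : (⟨((xv ht j).1 : ℕ) - (t - 4), by have := (xv ht j).1.isLt; omega⟩ : Fin 4)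
      = (Xe j).1 := by
    apply Fin.ext
    simp only [xv, embC]
    omega
  rw [h2]
  exact ge_Xe j

lemma col_yv (ht : 6 ≤ t) (j : Fin 6) : col ht (yv ht j) = 1 := by
  have h1 : ¬ ((yv ht j).1 : ℕ) < t - 4 := by
    simp only [yv, embC]
    omega
  rw [col, dif_neg h1]
  have h2 : (⟨((yv ht j).1 : ℕ) - (t - 4), by have := (yv ht j).1.isLt; omega⟩ : Fin 4)
      = (Ye j).1 := by
    apply Fin.ext
    simp only [yv, embC]
    omega
  rw [h2]
  exact ge_Ye j

lemma emb_pair_eq (ht : 6 ≤ t) {p q : Fin 4 × Fin 3}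
    (h : ((embC ht p.1, p.2) : Fin t × Fin 3) = (embC ht q.1, q.2)) : p = q := by
  have h1 := congrArg Prod.fst h
  have h2 := congrArg Prod.snd h
  simp only at h1 h2
  have h3 := congrArg Fin.val h1
  simp only [embC] at h3
  have : p.1 = q.1 := Fin.ext (by omega)
  exact Prod.ext this h2

lemma disj_pp (ht : 6 ≤ t) {i i' : ℕ} (hi : i < t-4) (hi' : i' < t-4) (hne : i ≠ i') :
    Disjoint (pathTree ht i hi).verts (pathTree ht i' hi').verts := by
  rw [Set.disjoint_left, pathTree_verts, pathTree_verts]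
  intro v hv hv'
  simp only [Set.mem_insert_iff, Set.mem_singleton_iff] at hv hv'
  rcases hv with rfl | rfl | rfl <;> rcases hv' with h | h | h <;>
    simp [pA, pB, pD, Prod.mk.injEq, Fin.mk.injEq] at h <;>
    (try split_ifs at h) <;> omega

lemma pathTree_col_lt (ht : 6 ≤ t) {i : ℕ} (hi : i < t-4) {v : Fin t × Fin 3}
    (hv : v ∈ (pathTree ht i hi).verts) : (v.1 : ℕ) < t - 4 := by
  rw [pathTree_verts] at hv
  rcases hv with rfl | rfl | rfl <;> simp [pA, pB, pD] <;> (try split_ifs) <;> omega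

lemma edgeTree_col_ge (ht : 6 ≤ t) {j : Fin 6} {v : Fin t × Fin 3}
    (hv : v ∈ (edgeTree ht j).verts) : t - 4 ≤ (v.1 : ℕ) := by
  rw [edgeTree_verts] at hv
  rcases hv with rfl | rfl <;> simp [xv, yv, embC]

lemma disj_pe (ht : 6 ≤ t) {i : ℕ} (hi : i < t-4) (j : Fin 6) :
    Disjoint (pathTree ht i hi).verts (edgeTree ht j).verts := by
  rw [Set.disjoint_left]
  intro v hv hv'
  have h1 := pathTree_col_lt ht hi hv
  have h2 := edgeTree_col_ge ht hv'
  omega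

lemma disj_ee (ht : 6 ≤ t) {j j' : Fin 6} (hne : j ≠ j') :
    Disjoint (edgeTree ht j).verts (edgeTree ht j').verts := by
  obtain ⟨d1, d2, d3, d4⟩ := distinct_XY j j' hne
  rw [Set.disjoint_left, edgeTree_verts, edgeTree_verts]
  rintro v hv hv'
  simp only [Set.mem_insert_iff, Set.mem_singleton_iff] at hv hv'
  rcases hv with rfl | rfl <;> rcases hv' with h | h
  · exact d1 (emb_pair_eq ht h)
  · exact d2 (emb_pair_eq ht h)
  · exact d4 (emb_pair_eq ht h)
  · exact d3 (emb_pair_eq ht h)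

lemma prop_path (ht : 6 ≤ t) {i : ℕ} (hi : i < t-4) :
    ∀ x y, (pathTree ht i hi).Adj x y → col ht x ≠ col ht y := by
  intro x y h
  rw [pathTree, Subgraph.sup_adj] at h
  rcases h with h | h
  · rw [SimpleGraph.subgraphOfAdj_adj, Sym2.eq_iff] at h
    rcases h with ⟨rfl, rfl⟩ | ⟨rfl, rfl⟩ <;>
      rw [col_pA, col_pB] <;> decide
  · rw [SimpleGraph.subgraphOfAdj_adj, Sym2.eq_iff] at h
    rcases h with ⟨rfl, rfl⟩ | ⟨rfl, rfl⟩ <;>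
      rw [col_pB, col_pD] <;> decide

lemma prop_edge (ht : 6 ≤ t) (j : Fin 6) :
    ∀ x y, (edgeTree ht j).Adj x y → col ht x ≠ col ht y := by
  intro x y h
  rw [edgeTree, SimpleGraph.subgraphOfAdj_adj, Sym2.eq_iff] at h
  rcases h with ⟨rfl, rfl⟩ | ⟨rfl, rfl⟩ <;>
    rw [col_xv, col_yv] <;> decide

lemma conn_pp (ht : 6 ≤ t) {i i' : ℕ} (hi : i < t-4) (hi' : i' < t-4) (hne : i ≠ i') :
    ∃ x y, x ∈ (pathTree ht i hi).verts ∧ y ∈ (pathTree ht i' hi').verts ∧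
      (KG t).Adj x y ∧ col ht x = col ht y := by
  refine ⟨pA i hi, pD i' hi', ?_, ?_, ?_, ?_⟩
  · rw [pathTree_verts]; left; rfl
  · rw [pathTree_verts]; right; right; rfl
  · exact KG_adj (by simp [pA, pD, Fin.ext_iff]; omega) (by simp [pA, pD])
  · rw [col_pA, col_pD]

lemma conn_pe (ht : 6 ≤ t) {i : ℕ} (hi : i < t-4) (j : Fin 6) :
    ∃ x y, x ∈ (pathTree ht i hi).verts ∧ y ∈ (edgeTree ht j).verts ∧
      (KG t).Adj x y ∧ col ht x = col ht y := by
  by_cases hr : (Ye j).2 = 0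
  · refine ⟨pD i hi, yv ht j, ?_, ?_, ?_, ?_⟩
    · rw [pathTree_verts]; right; right; rfl
    · rw [edgeTree_verts]; right; rfl
    · refine KG_adj ?_ ?_
      · have hb := ((Ye j).1).isLt
        simp only [pD, yv, embC, ne_eq, Fin.mk.injEq]
        omega
      · simp only [pD, yv, hr]
        decide
    · rw [col_pD, col_yv]
  · refine ⟨pA i hi, yv ht j, ?_, ?_, ?_, ?_⟩
    · rw [pathTree_verts]; left; rfl
    · rw [edgeTree_verts]; right; rfl
    · refine KG_adj ?_ ?_
      · have hb := ((Ye j).1).isLt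
        simp only [pA, yv, embC, ne_eq, Fin.mk.injEq]
        omega
      · simp only [pA, yv]
        exact fun hh => hr hh.symm
    · rw [col_pA, col_yv]

lemma conn_ee (ht : 6 ≤ t) {j j' : Fin 6} (hne : j ≠ j') :
    ∃ x y, x ∈ (edgeTree ht j).verts ∧ y ∈ (edgeTree ht j').verts ∧
      (KG t).Adj x y ∧ col ht x = col ht y := by
  rcases conn_XY j j' hne with ⟨h1, h2⟩ | ⟨h1, h2⟩
  · refine ⟨xv ht j, xv ht j', ?_, ?_, KG_adj (embC_inj ht h1) h2, ?_⟩
    · rw [edgeTree_verts]; left; rfl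
    · rw [edgeTree_verts]; left; rfl
    · rw [col_xv, col_xv]
  · refine ⟨yv ht j, yv ht j', ?_, ?_, KG_adj (embC_inj ht h1) h2, ?_⟩
    · rw [edgeTree_verts]; right; rfl
    · rw [edgeTree_verts]; right; rfl
    · rw [col_yv, col_yv]

lemma wne_of_ne {t : ℕ} {w w' : Fin (t+2)} (h : ¬ (w : ℕ) < t - 4) (h' : ¬ (w' : ℕ) < t - 4)
    (hww : w ≠ w') :
    (⟨(w : ℕ) - (t - 4), by have := w.isLt; omega⟩ : Fin 6) ≠
      ⟨(w' : ℕ) - (t - 4), by have := w'.isLt; omega⟩ := by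
  intro hc
  apply hww
  have := congrArg Fin.val hc
  simp only [Fin.val_mk] at this
  exact Fin.ext (by omega)

lemma lower (t : ℕ) (ht : 6 ≤ t) :
    IsOddMinorOf (⊤ : SimpleGraph (Fin (t+2))) (KG t) := by
  classical
  refine ⟨fun w => if h : (w : ℕ) < t - 4 then pathTree ht w h
    else edgeTree ht ⟨(w : ℕ) - (t - 4), by have := w.isLt; omega⟩, col ht, ?_, ?_, ?_, ?_⟩
  · intro w
    by_cases h : (w : ℕ) < t - 4
    · beta_reduce
      rw [dif_pos h]; exact pathTree_isTree ht w h
    · beta_reduce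
      rw [dif_neg h]; exact edgeTree_isTree ht _
  · intro w w' hww
    by_cases h : (w : ℕ) < t - 4 <;> by_cases h' : (w' : ℕ) < t - 4
    · beta_reduce
      rw [dif_pos h, dif_pos h']
      exact disj_pp ht h h' (fun hc => hww (Fin.ext hc))
    · beta_reduce
      rw [dif_pos h, dif_neg h']
      exact disj_pe ht h _
    · beta_reduce
      rw [dif_neg h, dif_pos h']
      exact (disj_pe ht h' _).symm
    · beta_reduce
      rw [dif_neg h, dif_neg h']
      exact disj_ee ht (wne_of_ne h h' hww)
  · intro w
    by_cases h : (w : ℕ) < t - 4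
    · beta_reduce
      rw [dif_pos h]; exact prop_path ht h
    · beta_reduce
      rw [dif_neg h]; exact prop_edge ht _
  · intro w w' hadj
    have hww : w ≠ w' := by simpa using hadj
    by_cases h : (w : ℕ) < t - 4 <;> by_cases h' : (w' : ℕ) < t - 4
    · beta_reduce
      rw [dif_pos h, dif_pos h']
      exact conn_pp ht h h' (fun hc => hww (Fin.ext hc))
    · beta_reduce
      rw [dif_pos h, dif_neg h']
      exact conn_pe ht h _
    · beta_reduce
      rw [dif_neg h, dif_pos h']
      obtain ⟨x, y, hx, hy, hxy, hcol⟩ := conn_pe ht h' ⟨(w : ℕ) - (t - 4), by have := w.isLt; omega⟩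
      exact ⟨y, x, hy, hx, hxy.symm, hcol.symm⟩
    · beta_reduce
      rw [dif_neg h, dif_neg h']
      exact conn_ee ht (wne_of_ne h h' hww)

end OddLower


lemma adj_of_two_verts {V : Type*} {G : SimpleGraph V} (H : G.Subgraph)
    (hc : H.coe.Connected) {x y : V} (hx : x ∈ H.verts) (hy : y ∈ H.verts)
    (hxy : x ≠ y) (hsub : H.verts ⊆ {x, y}) : H.Adj x y := by
  obtain ⟨p⟩ := hc.preconnected ⟨x, hx⟩ ⟨y, hy⟩
  cases p with
  | nil => exact absurd rfl hxy
  | cons hadj q =>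
    rename_i u
    have hu : u.1 ∈ ({x, y} : Set _) := hsub u.2
    rcases hu with h | h
    · exact absurd (h ▸ (H.adj_sub hadj)).ne (by simp)
    · exact h ▸ (hadj : H.Adj x u.1)

lemma no_big (t m : ℕ) (ht : 6 ≤ t) (hm : t + 3 ≤ m) :
    ¬ IsOddMinorOf (⊤ : SimpleGraph (Fin m))
      (dirProd (⊤ : SimpleGraph (Fin t)) (⊤ : SimpleGraph (Fin 3))) := by
  classical
  rintro ⟨T, c, htree, hdisj, hprop, hconn⟩
  -- basic connection fact
  have key : ∀ w w', w ≠ w' → ∃ x y, x ∈ (T w).verts ∧ y ∈ (T w').verts ∧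
      x.1 ≠ y.1 ∧ x.2 ≠ y.2 ∧ c x = c y := by
    intro w w' hww
    obtain ⟨x, y, hx, hy, hadj, hcc⟩ := hconn w w' (by simpa using hww)
    exact ⟨x, y, hx, hy, hadj.1.ne, hadj.2.ne, hcc⟩
  -- finsets of vertices
  set Vt : Fin m → Finset (Fin t × Fin 3) :=
    fun w => (Set.toFinite (T w).verts).toFinset with hVt
  have hmem : ∀ w x, x ∈ Vt w ↔ x ∈ (T w).verts := by
    intro w x; rw [Set.Finite.mem_toFinset]
  have hne : ∀ w, 1 ≤ (Vt w).card := by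
    intro w
    have h0 : Nonempty ((T w).verts : Set _) := (htree w).isConnected.nonempty
    obtain ⟨v, hv⟩ := h0
    exact Finset.card_pos.mpr ⟨v, (hmem w v).mpr hv⟩
  -- total count
  have hsum : ∑ w : Fin m, (Vt w).card ≤ t * 3 := by
    rw [← Finset.card_biUnion (by
      intro w _ w' _ hww
      simp only [hVt, Set.Finite.disjoint_toFinset]
      exact hdisj hww)]
    calc (Finset.univ.biUnion Vt).card ≤ Fintype.card (Fin t × Fin 3) :=
          Finset.card_le_univ _
      _ = t * 3 := by simp
  set S1 := Finset.univ.filter (fun w => (Vt w).card = 1) with hS1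
  set S2 := Finset.univ.filter (fun w => (Vt w).card = 2) with hS2
  have hS1S2 : ∀ w ∈ S1, ∀ w' ∈ S2, w ≠ w' := by
    intro w hw w' hw' h
    subst h
    have h1 := (Finset.mem_filter.mp hw).2
    have h2 := (Finset.mem_filter.mp hw').2
    omega
  have hcount : 9 ≤ 2 * S1.card + S2.card := by
    have hpt : ∀ w : Fin m, 3 ≤ (Vt w).card +
        ((if w ∈ S1 then 2 else 0) + (if w ∈ S2 then 1 else 0)) := by
      intro w
      have h1 := hne w
      by_cases hw1 : (Vt w).card = 1
      · have hin : w ∈ S1 := Finset.mem_filter.mpr ⟨Finset.mem_univ _, hw1⟩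
        have hnotin : w ∉ S2 := fun h => by
          have := (Finset.mem_filter.mp h).2; omega
        simp [hin, hnotin, hw1]
      by_cases hw2 : (Vt w).card = 2
      · have hin : w ∈ S2 := Finset.mem_filter.mpr ⟨Finset.mem_univ _, hw2⟩
        have hnotin : w ∉ S1 := fun h => by
          have := (Finset.mem_filter.mp h).2; omega
        simp [hin, hnotin, hw2]
      · have : 3 ≤ (Vt w).card := by omega
        omega
    have h3m : (3 : ℕ) * m ≤ ∑ w : Fin m, ((Vt w).card +
        ((if w ∈ S1 then 2 else 0) + (if w ∈ S2 then 1 else 0))) := by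
      calc (3 : ℕ) * m = ∑ _w : Fin m, 3 := by simp [mul_comm]
        _ ≤ _ := Finset.sum_le_sum (fun w _ => hpt w)
    rw [Finset.sum_add_distrib, Finset.sum_add_distrib] at h3m
    have e1 : ∑ w : Fin m, (if w ∈ S1 then (2:ℕ) else 0) = 2 * S1.card := by
      rw [Finset.sum_ite_mem, Finset.univ_inter, Finset.sum_const, smul_eq_mul, mul_comm]
    have e2 : ∑ w : Fin m, (if w ∈ S2 then (1:ℕ) else 0) = S2.card := by
      rw [Finset.sum_ite_mem, Finset.univ_inter, Finset.sum_const, smul_eq_mul, mul_one]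
    rw [e1, e2] at h3m
    omega
  -- singleton trees
  have hv1' : ∀ w, (Vt w).card = 1 → ∃ v, (T w).verts = {v} := by
    intro w hw
    obtain ⟨v, hv⟩ := Finset.card_eq_one.mp hw
    refine ⟨v, ?_⟩
    ext u
    rw [← hmem w u, hv]
    simp
  haveI : NeZero t := ⟨by omega⟩
  choose! v1 hv1 using hv1'
  have hS1mem : ∀ w ∈ S1, (T w).verts = {v1 w} := by
    intro w hw; exact hv1 w (Finset.mem_filter.mp hw).2
  have hS1key : ∀ w ∈ S1, ∀ w' ∈ S1, w ≠ w' →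
      (v1 w).1 ≠ (v1 w').1 ∧ (v1 w).2 ≠ (v1 w').2 ∧ c (v1 w) = c (v1 w') := by
    intro w hw w' hw' hww
    obtain ⟨x, y, hx, hy, h1, h2, h3⟩ := key w w' hww
    rw [hS1mem w hw, Set.mem_singleton_iff] at hx
    rw [hS1mem w' hw', Set.mem_singleton_iff] at hy
    subst hx; subst hy
    exact ⟨h1, h2, h3⟩
  have hS1card : S1.card ≤ 3 := by
    have hinj : Set.InjOn (fun w => (v1 w).2) S1 := by
      intro w hw w' hw' heq
      by_contra hne'
      exact ((hS1key w (by simpa using hw) w' (by simpa using hw') hne').2.1) heq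
    calc S1.card ≤ (Finset.univ : Finset (Fin 3)).card :=
          Finset.card_le_card_of_injOn _ (fun _ _ => Finset.mem_univ _) hinj
      _ = 3 := by simp
  -- two-vertex trees
  have hv2' : ∀ w, (Vt w).card = 2 → ∃ p : (Fin t × Fin 3) × (Fin t × Fin 3),
      (T w).verts = {p.1, p.2} ∧ (T w).Adj p.1 p.2 := by
    intro w hw
    obtain ⟨x, y, hxy, hv⟩ := Finset.card_eq_two.mp hw
    have hverts : (T w).verts = {x, y} := by
      ext u
      rw [← hmem w u, hv]
      simp
    have hadj : (T w).Adj x y :=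
      adj_of_two_verts _ (htree w).isConnected (by rw [hverts]; simp)
        (by rw [hverts]; simp) hxy (by rw [hverts])
    exact ⟨(x, y), hverts, hadj⟩
  choose! pr2 hpr2 using hv2'
  set x2 : Fin m → Fin t × Fin 3 := fun w => (pr2 w).1 with hx2
  set y2 : Fin m → Fin t × Fin 3 := fun w => (pr2 w).2 with hy2
  have hS2verts : ∀ w ∈ S2, (T w).verts = {x2 w, y2 w} := by
    intro w hw; exact (hpr2 w (Finset.mem_filter.mp hw).2).1
  have hS2adj : ∀ w ∈ S2, (T w).Adj (x2 w) (y2 w) := by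
    intro w hw; exact (hpr2 w (Finset.mem_filter.mp hw).2).2
  have hS2col : ∀ w ∈ S2, c (x2 w) ≠ c (y2 w) := by
    intro w hw; exact hprop w _ _ (hS2adj w hw)
  have hS2rows : ∀ w ∈ S2, (x2 w).2 ≠ (y2 w).2 ∧ (x2 w).1 ≠ (y2 w).1 := by
    intro w hw
    have := (T w).adj_sub (hS2adj w hw)
    exact ⟨this.2.ne, this.1.ne⟩
  set z : Fin m → Fin 2 → Fin t × Fin 3 :=
    fun w ε => if c (x2 w) = ε then x2 w else y2 w with hz
  have fin2 : ∀ a b e : Fin 2, a ≠ b → a ≠ e → b = e := by decide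
  have hz_mem : ∀ w ∈ S2, ∀ ε, z w ε ∈ (T w).verts := by
    intro w hw ε
    rw [hS2verts w hw]
    by_cases h : c (x2 w) = ε <;> simp [hz, h]
  have hz_col : ∀ w ∈ S2, ∀ ε, c (z w ε) = ε := by
    intro w hw ε
    by_cases h : c (x2 w) = ε
    · simp [hz, h]
    · simp only [hz, h, if_false]
      exact fin2 _ _ _ (hS2col w hw) h
  have hz_unique : ∀ w ∈ S2, ∀ u ∈ (T w).verts, ∀ ε, c u = ε → u = z w ε := by
    intro w hw u hu ε hcu
    rw [hS2verts w hw] at hu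
    rcases hu with h | h
    · subst h; simp [hz, hcu]
    · subst h
      have : c (x2 w) ≠ ε := fun hh => (hS2col w hw) (hh.trans hcu.symm)
      simp [hz, this]
  have fin2' : ∀ a e e' : Fin 2, a ≠ e → e ≠ e' → a = e' := by decide
  have hfin2add : ∀ e : Fin 2, e + 1 ≠ e := by decide
  have hz_rows : ∀ w ∈ S2, ∀ ε ε', ε ≠ ε' → (z w ε).2 ≠ (z w ε').2 := by
    intro w hw ε ε' hee
    by_cases h : c (x2 w) = ε
    · have h' : c (x2 w) ≠ ε' := fun hh => hee (h.symm.trans hh)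
      have e1 : z w ε = x2 w := by simp only [hz]; rw [if_pos h]
      have e2 : z w ε' = y2 w := by simp only [hz]; rw [if_neg h']
      rw [e1, e2]; exact (hS2rows w hw).1
    · have h' : c (x2 w) = ε' := fin2' _ _ _ h hee
      have e1 : z w ε = y2 w := by simp only [hz]; rw [if_neg h]
      have e2 : z w ε' = x2 w := by simp only [hz]; rw [if_pos h']
      rw [e1, e2]; exact (hS2rows w hw).1.symm
  have hS2key : ∀ w ∈ S2, ∀ w' ∈ S2, w ≠ w' →
      ∃ ε, (z w ε).1 ≠ (z w' ε).1 ∧ (z w ε).2 ≠ (z w' ε).2 := by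
    intro w hw w' hw' hww
    obtain ⟨x, y, hx, hy, h1, h2, h3⟩ := key w w' hww
    refine ⟨c x, ?_⟩
    have hxz := hz_unique w hw x hx (c x) rfl
    have hyz := hz_unique w' hw' y hy (c x) h3.symm
    rw [← hxz, ← hyz]
    exact ⟨h1, h2⟩
  have hS12 : ∀ w ∈ S2, ∀ w' ∈ S1,
      (z w (c (v1 w'))).1 ≠ (v1 w').1 ∧ (z w (c (v1 w'))).2 ≠ (v1 w').2 := by
    intro w hw w' hw'
    have hww : w ≠ w' := (hS1S2 w' hw' w hw).symm
    obtain ⟨x, y, hx, hy, h1, h2, h3⟩ := key w w' hww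
    rw [hS1mem w' hw', Set.mem_singleton_iff] at hy
    subst hy
    have hxz := hz_unique w hw x hx (c (v1 w')) h3
    rw [← hxz]
    exact ⟨h1, h2⟩
  have hS1cases : S1.card ≤ 1 ∨ S1.card = 2 ∨ S1.card = 3 := by omega
  rcases hS1cases with hA | hB | hC
  · -- few singletons: at least 7 two-vertex trees
    have hS2card : 7 ≤ S2.card := by omega
    have hφ : ∀ w ∈ S2, ((z w 0).2, (z w 1).2) ∈
        Finset.univ.filter (fun p : Fin 3 × Fin 3 => p.1 ≠ p.2) := by
      intro w hw
      simp only [Finset.mem_filter, Finset.mem_univ, true_and]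
      exact hz_rows w hw 0 1 (by decide)
    have hinj : Set.InjOn (fun w => ((z w 0).2, (z w 1).2)) S2 := by
      intro w hw w' hw' heq
      by_contra hne'
      obtain ⟨ε, hcolg, hrowg⟩ := hS2key w (Finset.mem_coe.mp hw) w' (Finset.mem_coe.mp hw') hne'
      have h0 := congrArg Prod.fst heq
      have h1 := congrArg Prod.snd heq
      simp only at h0 h1
      fin_cases ε
      · exact hrowg h0
      · exact hrowg h1
    have hle := Finset.card_le_card_of_injOn _ hφ hinj
    have h6 : (Finset.univ.filter (fun p : Fin 3 × Fin 3 => p.1 ≠ p.2)).card = 6 := by decide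
    omega
  · -- two singletons
    have hS2card : 5 ≤ S2.card := by omega
    obtain ⟨w1, w2, hw12, hS1eq⟩ := Finset.card_eq_two.mp hB
    have hw1 : w1 ∈ S1 := by rw [hS1eq]; simp
    have hw2 : w2 ∈ S1 := by rw [hS1eq]; simp
    obtain ⟨hc1, hr1, hcol⟩ := hS1key w1 hw1 w2 hw2 hw12
    have hrow3 : ∀ w ∈ S2, (z w (c (v1 w1))).2 ≠ (v1 w1).2 ∧
        (z w (c (v1 w1))).2 ≠ (v1 w2).2 := by
      intro w hw
      refine ⟨(hS12 w hw w1 hw1).2, ?_⟩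
      have h := (hS12 w hw w2 hw2).2
      rwa [← hcol] at h
    have hfix : ∀ w ∈ S2, ∀ w' ∈ S2, (z w (c (v1 w1))).2 = (z w' (c (v1 w1))).2 := by
      intro w hw w' hw'
      have f3 : ∀ a b r r' : Fin 3, a ≠ b → r ≠ a → r ≠ b → r' ≠ a → r' ≠ b → r = r' := by decide
      exact f3 _ _ _ _ hr1 (hrow3 w hw).1 (hrow3 w hw).2 (hrow3 w' hw').1 (hrow3 w' hw').2
    obtain ⟨w0, hw0⟩ := Finset.card_pos.mp (by omega : 0 < S2.card)
    have hinj : Set.InjOn (fun w => (z w (c (v1 w1) + 1)).2) S2 := by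
      intro w hw w' hw' heq
      by_contra hne'
      obtain ⟨γ, hcolg, hrowg⟩ := hS2key w (Finset.mem_coe.mp hw) w' (Finset.mem_coe.mp hw') hne'
      by_cases hγ : γ = c (v1 w1)
      · subst hγ
        exact hrowg (hfix w (Finset.mem_coe.mp hw) w' (Finset.mem_coe.mp hw'))
      · have hγ' : γ = c (v1 w1) + 1 := fin2' _ _ _ hγ (hfin2add _).symm
        subst hγ'
        exact hrowg heq
    have hmemδ : ∀ w ∈ S2, (z w (c (v1 w1) + 1)).2 ∈
        (Finset.univ : Finset (Fin 3)).erase ((z w0 (c (v1 w1))).2) := by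
      intro w hw
      rw [Finset.mem_erase]
      refine ⟨?_, Finset.mem_univ _⟩
      rw [← hfix w hw w0 hw0]
      exact hz_rows w hw _ _ (hfin2add _)
    have hle := Finset.card_le_card_of_injOn _ hmemδ hinj
    have h2c : ((Finset.univ : Finset (Fin 3)).erase ((z w0 (c (v1 w1))).2)).card = 2 := by
      rw [Finset.card_erase_of_mem (Finset.mem_univ _)]
      simp
    omega
  · -- three singletons
    have hS2card : 3 ≤ S2.card := by omega
    obtain ⟨w1, w2, w3, h12, h13, h23, hS1eq⟩ := Finset.card_eq_three.mp hC
    have hw1 : w1 ∈ S1 := by rw [hS1eq]; simp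
    have hw2 : w2 ∈ S1 := by rw [hS1eq]; simp
    have hw3 : w3 ∈ S1 := by rw [hS1eq]; simp
    obtain ⟨-, hr12, hc12⟩ := hS1key w1 hw1 w2 hw2 h12
    obtain ⟨-, hr13, hc13⟩ := hS1key w1 hw1 w3 hw3 h13
    obtain ⟨-, hr23, -⟩ := hS1key w2 hw2 w3 hw3 h23
    obtain ⟨w0, hw0⟩ := Finset.card_pos.mp (by omega : 0 < S2.card)
    have h1 := (hS12 w0 hw0 w1 hw1).2
    have h2 := (hS12 w0 hw0 w2 hw2).2
    have h3 := (hS12 w0 hw0 w3 hw3).2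
    rw [← hc12] at h2
    rw [← hc13] at h3
    have f3 : ∀ r a b d : Fin 3, a ≠ b → a ≠ d → b ≠ d →
        r ≠ a → r ≠ b → r = d := by decide
    exact h3 (f3 _ _ _ _ hr12 hr13 hr23 h1 h2)


theorem stmt_11 (t : ℕ) (ht : 6 ≤ t) :
    oddHadwiger (dirProd (⊤ : SimpleGraph (Fin t)) (⊤ : SimpleGraph (Fin 3))) = t + 2 := by
  have hmem : (t + 2) ∈ {r : ℕ | IsOddMinorOf (⊤ : SimpleGraph (Fin r))
      (dirProd (⊤ : SimpleGraph (Fin t)) (⊤ : SimpleGraph (Fin 3)))} :=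
    OddLower.lower t ht
  have hub : ∀ r ∈ {r : ℕ | IsOddMinorOf (⊤ : SimpleGraph (Fin r))
      (dirProd (⊤ : SimpleGraph (Fin t)) (⊤ : SimpleGraph (Fin 3)))}, r ≤ t + 2 := by
    intro r hr
    by_contra hc
    exact no_big t r ht (by omega) hr
  exact IsGreatest.csSup_eq ⟨hmem, hub⟩
end

section
/- For all integers t ≥ 4 and s ≥ 3, the odd Hadwiger number of the direct product of complete graphs satisfies oh(K_t × K_s) ≥ t · ⌊s/3⌋. -/
open SimpleGraph

namespace OddAux

/-- A path on the three vertices `a, b, c` (in this order) as a subgraph of `G`. -/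
def path3 {V : Type*} {G : SimpleGraph V} (a b c : V) (hab : G.Adj a b) (hbc : G.Adj b c) :
    G.Subgraph where
  verts := {a, b, c}
  Adj x y := (x = a ∧ y = b) ∨ (x = b ∧ y = a) ∨ (x = b ∧ y = c) ∨ (x = c ∧ y = b)
  adj_sub := by
    rintro x y (⟨rfl, rfl⟩ | ⟨rfl, rfl⟩ | ⟨rfl, rfl⟩ | ⟨rfl, rfl⟩)
    exacts [hab, hab.symm, hbc, hbc.symm]
  edge_vert := by
    rintro x y (⟨rfl, -⟩ | ⟨rfl, -⟩ | ⟨rfl, -⟩ | ⟨rfl, -⟩) <;> simp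
  symm := by
    constructor
    rintro x y (⟨rfl, rfl⟩ | ⟨rfl, rfl⟩ | ⟨rfl, rfl⟩ | ⟨rfl, rfl⟩) <;> tauto

lemma path3_verts {V : Type*} {G : SimpleGraph V} (a b c : V) (hab : G.Adj a b)
    (hbc : G.Adj b c) : (path3 a b c hab hbc).verts = {a, b, c} := rfl

lemma path3_adj {V : Type*} {G : SimpleGraph V} (a b c : V) (hab : G.Adj a b)
    (hbc : G.Adj b c) {x y : V} : (path3 a b c hab hbc).Adj x y ↔
      (x = a ∧ y = b) ∨ (x = b ∧ y = a) ∨ (x = b ∧ y = c) ∨ (x = c ∧ y = b) := Iff.rfl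

lemma path3_isTree {V : Type*} {G : SimpleGraph V} {a b c : V} (hab : G.Adj a b)
    (hbc : G.Adj b c) (hac : a ≠ c) : (path3 a b c hab hbc).coe.IsTree := by
  set H := path3 a b c hab hbc with hH
  have hbmem : b ∈ H.verts := by simp [hH, path3_verts]
  set B : ↥H.verts := ⟨b, hbmem⟩ with hBdef
  have hB : ∀ x y : ↥H.verts, H.coe.Adj x y → x = B ∨ y = B := by
    intro x y hxy
    rw [Subgraph.coe_adj] at hxy
    rcases (path3_adj a b c hab hbc).mp hxy with ⟨h, h'⟩ | ⟨h, h'⟩ | ⟨h, h'⟩ | ⟨h, h'⟩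
    · exact Or.inr (Subtype.ext h')
    · exact Or.inl (Subtype.ext h)
    · exact Or.inl (Subtype.ext h)
    · exact Or.inr (Subtype.ext h')
  have hreach : ∀ x : ↥H.verts, H.coe.Reachable x B := by
    rintro ⟨x, hx⟩
    rw [hH, path3_verts, Set.mem_insert_iff, Set.mem_insert_iff, Set.mem_singleton_iff] at hx
    rcases hx with rfl | rfl | rfl
    · exact (Adj.reachable (by
        rw [Subgraph.coe_adj]; exact Or.inl ⟨rfl, rfl⟩))
    · exact Reachable.refl _
    · exact (Adj.reachable (by
        rw [Subgraph.coe_adj]; exact Or.inr (Or.inr (Or.inr ⟨rfl, rfl⟩))))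
  constructor
  · haveI : Nonempty ↥H.verts := ⟨B⟩
    exact Connected.mk fun x y => (hreach x).trans (hreach y).symm
  · intro v p hp
    have h3 := hp.three_le_length
    have hn := hp.support_nodup
    match p, hp, h3, hn with
    | .cons h1 (.cons h2 (.cons h3' q)), hp, h3, hn =>
      rename_i x1 x2 x3
      simp only [Walk.support_cons, List.tail_cons, List.nodup_cons] at hn
      obtain ⟨hn1, hn2, -⟩ := hn
      have hvq : v ∈ q.support := q.end_mem_support
      by_cases hvB : v = B
      · have hx1 : x1 ≠ B := fun h => (h1.ne) (hvB.trans h.symm)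
        have hx2 : x2 = B := by
          rcases hB _ _ h2 with h | h
          · exact absurd h hx1
          · exact h
        exact hn2 (by rw [hx2, ← hvB]; exact hvq)
      · have hx1 : x1 = B := by
          rcases hB _ _ h1 with h | h
          · exact absurd h hvB
          · exact h
        have hx2 : x2 ≠ B := fun h => (h2.ne) (hx1.trans h.symm)
        have hx3 : x3 = B := by
          rcases hB _ _ h3' with h | h
          · exact absurd h hx2
          · exact h
        exact hn1 (List.mem_cons_of_mem _ (by rw [hx1, ← hx3]; exact q.start_mem_support))



section Main

variable {t s : ℕ}

def vA (ht : 4 ≤ t) (i : Fin t) (a : ℕ) : Fin t :=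
  ⟨(i.val + a) % t, Nat.mod_lt _ (by omega)⟩

def vB (hs : 3 ≤ s) (j : Fin (s / 3)) (k : ℕ) (hk : k < 3) : Fin s :=
  ⟨3 * j.val + k, by have := j.isLt; omega⟩

lemma vA_val (ht : 4 ≤ t) (i : Fin t) (a : ℕ) (ha : a < 3) :
    (vA ht i a).val = if i.val + a < t then i.val + a else i.val + a - t := by
  simp only [vA]
  split_ifs with h
  · exact Nat.mod_eq_of_lt h
  · rw [Nat.mod_eq_sub_mod (by omega), Nat.mod_eq_of_lt (by have := i.isLt; omega)]

lemma vA_val0 (ht : 4 ≤ t) (i : Fin t) : (vA ht i 0).val = i.val := by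
  rw [vA_val ht i 0 (by omega)]; have := i.isLt; split_ifs <;> omega

lemma vA_val1 (ht : 4 ≤ t) (i : Fin t) :
    (vA ht i 1).val = if i.val + 1 < t then i.val + 1 else i.val + 1 - t :=
  vA_val ht i 1 (by omega)

lemma vA_val2 (ht : 4 ≤ t) (i : Fin t) :
    (vA ht i 2).val = if i.val + 2 < t then i.val + 2 else i.val + 2 - t :=
  vA_val ht i 2 (by omega)

lemma vB_val (hs : 3 ≤ s) (j : Fin (s / 3)) (k : ℕ) (hk : k < 3) :
    (vB hs j k hk).val = 3 * j.val + k := rfl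

lemma dirProd_adj {α β : Type*} {G : SimpleGraph α} {H : SimpleGraph β} {x y : α × β} :
    (dirProd G H).Adj x y ↔ G.Adj x.1 y.1 ∧ H.Adj x.2 y.2 := Iff.rfl

/-- The branch set for the pair `(i, j)`. -/
def tree (ht : 4 ≤ t) (hs : 3 ≤ s) (i : Fin t) (j : Fin (s / 3)) :
    (dirProd (⊤ : SimpleGraph (Fin t)) (⊤ : SimpleGraph (Fin s))).Subgraph :=
  path3 (vA ht i 0, vB hs j 0 (by omega)) (vA ht i 2, vB hs j 1 (by omega))
    (vA ht i 1, vB hs j 2 (by omega))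
    (by
      rw [dirProd_adj]
      constructor
      · rw [top_adj, Ne, Fin.ext_iff, vA_val ht i 0 (by omega), vA_val ht i 2 (by omega)]
        have := i.isLt; split_ifs <;> omega
      · rw [top_adj, Ne, Fin.ext_iff]; simp only [vB]; omega)
    (by
      rw [dirProd_adj]
      constructor
      · rw [top_adj, Ne, Fin.ext_iff, vA_val ht i 2 (by omega), vA_val ht i 1 (by omega)]
        have := i.isLt; split_ifs <;> omega
      · rw [top_adj, Ne, Fin.ext_iff]; simp only [vB]; omega)

lemma tree_isTree (ht : 4 ≤ t) (hs : 3 ≤ s) (i : Fin t) (j : Fin (s / 3)) :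
    (tree ht hs i j).coe.IsTree := by
  apply path3_isTree
  intro h
  have h2 := congrArg Prod.snd h
  simp only [vB, Fin.mk.injEq] at h2
  omega

lemma tree_verts (ht : 4 ≤ t) (hs : 3 ≤ s) (i : Fin t) (j : Fin (s / 3)) :
    (tree ht hs i j).verts = {(vA ht i 0, vB hs j 0 (by omega)),
      (vA ht i 2, vB hs j 1 (by omega)), (vA ht i 1, vB hs j 2 (by omega))} := rfl

lemma tree_disjoint (ht : 4 ≤ t) (hs : 3 ≤ s) {i i' : Fin t} {j j' : Fin (s / 3)}
    (h : ¬(i = i' ∧ j = j')) :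
    Disjoint (tree ht hs i j).verts (tree ht hs i' j').verts := by
  rw [Set.disjoint_left]
  intro x hx hx'
  rw [tree_verts] at hx hx'
  simp only [Set.mem_insert_iff, Set.mem_singleton_iff] at hx hx'
  have hii := i.isLt; have hii' := i'.isLt
  apply h
  rcases hx with rfl | rfl | rfl <;> rcases hx' with h' | h' | h' <;>
    · have h1 := congrArg (fun p => (Prod.fst p).val) h'
      have h2 := congrArg (fun p => (Prod.snd p).val) h'
      simp only [vA_val0, vA_val1, vA_val2, vB_val] at h1 h2
      refine ⟨Fin.ext ?_, Fin.ext ?_⟩ <;>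
        first
          | (split_ifs at h1 <;> omega)
          | omega

lemma tree_proper (ht : 4 ≤ t) (hs : 3 ≤ s) (i : Fin t) (j : Fin (s / 3)) {x y}
    (h : (tree ht hs i j).Adj x y) :
    (if x.2.val % 3 = 1 then (1 : Fin 2) else 0) ≠ (if y.2.val % 3 = 1 then 1 else 0) := by
  rw [tree, path3_adj] at h
  rcases h with ⟨rfl, rfl⟩ | ⟨rfl, rfl⟩ | ⟨rfl, rfl⟩ | ⟨rfl, rfl⟩ <;>
    · split_ifs with h1 h2 <;> simp only [vB_val] at * <;> first | omega | decide

lemma tree_cross (ht : 4 ≤ t) (hs : 3 ≤ s) (i i' : Fin t) (j j' : Fin (s / 3)) :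
    ∃ x y, x ∈ (tree ht hs i j).verts ∧ y ∈ (tree ht hs i' j').verts ∧
      (dirProd (⊤ : SimpleGraph (Fin t)) (⊤ : SimpleGraph (Fin s))).Adj x y ∧
      (if x.2.val % 3 = 1 then (1 : Fin 2) else 0) = (if y.2.val % 3 = 1 then 1 else 0) := by
  have hii := i.isLt; have hii' := i'.isLt
  by_cases hcase : i.val = (vA ht i' 1).val
  · refine ⟨(vA ht i 1, vB hs j 2 (by omega)), (vA ht i' 0, vB hs j' 0 (by omega)),
      ?_, ?_, ?_, ?_⟩
    · rw [tree_verts]; right; right; rfl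
    · rw [tree_verts]; left; rfl
    · rw [dirProd_adj]
      refine ⟨?_, ?_⟩
      · rw [top_adj, Ne, Fin.ext_iff, vA_val1, vA_val0]
        rw [vA_val1] at hcase
        split_ifs at hcase ⊢ <;> omega
      · rw [top_adj, Ne, Fin.ext_iff, vB_val, vB_val]; omega
    · split_ifs with h1 h2 <;> simp only [vB_val] at * <;> omega
  · refine ⟨(vA ht i 0, vB hs j 0 (by omega)), (vA ht i' 1, vB hs j' 2 (by omega)),
      ?_, ?_, ?_, ?_⟩
    · rw [tree_verts]; left; rfl
    · rw [tree_verts]; right; right; rfl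
    · rw [dirProd_adj]
      refine ⟨?_, ?_⟩
      · rw [top_adj, Ne, Fin.ext_iff, vA_val0]
        exact hcase
      · rw [top_adj, Ne, Fin.ext_iff, vB_val, vB_val]; omega
    · split_ifs with h1 h2 <;> simp only [vB_val] at * <;> omega

end Main

end OddAux

theorem stmt_12 (t s : ℕ) (ht : 4 ≤ t) (hs : 3 ≤ s) :
    oddHadwiger (dirProd (⊤ : SimpleGraph (Fin t)) (⊤ : SimpleGraph (Fin s))) ≥ t * (s / 3) := by
  have ht0 : 0 < t := by omega
  rw [ge_iff_le, oddHadwiger]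
  set G := dirProd (⊤ : SimpleGraph (Fin t)) (⊤ : SimpleGraph (Fin s)) with hG
  have hbdd : BddAbove {r : ℕ | IsOddMinorOf (⊤ : SimpleGraph (Fin r)) G} := by
    refine ⟨Fintype.card (Fin t × Fin s), ?_⟩
    rintro r ⟨T, c, htree, hdisj, -, -⟩
    have hne : ∀ w : Fin r, ∃ x, x ∈ (T w).verts := by
      intro w
      obtain ⟨⟨x, hx⟩⟩ := (htree w).isConnected.nonempty
      exact ⟨x, hx⟩
    choose f hf using hne
    have hinj : Function.Injective f := by
      intro w w' hfw
      by_contra hne'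
      exact Set.disjoint_left.mp (hdisj hne') (hf w) (hfw ▸ hf w')
    simpa using Fintype.card_le_of_injective f hinj
  apply le_csSup hbdd
  show IsOddMinorOf _ G
  refine ⟨fun w => OddAux.tree ht hs ⟨w.val % t, Nat.mod_lt _ ht0⟩
      ⟨w.val / t, Nat.div_lt_of_lt_mul w.isLt⟩,
    fun x => if x.2.val % 3 = 1 then 1 else 0,
    fun w => OddAux.tree_isTree ht hs _ _, ?_, ?_, ?_⟩
  · intro w w' hww'
    apply OddAux.tree_disjoint
    rintro ⟨h1, h2⟩
    apply hww'
    have h1v : w.val % t = w'.val % t := congrArg Fin.val h1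
    have h2v : w.val / t = w'.val / t := congrArg Fin.val h2
    apply Fin.ext
    calc w.val = t * (w.val / t) + w.val % t := (Nat.div_add_mod _ _).symm
    _ = t * (w'.val / t) + w'.val % t := by rw [h1v, h2v]
    _ = w'.val := Nat.div_add_mod _ _
  · intro w x y hxy
    exact OddAux.tree_proper ht hs _ _ hxy
  · intro w w' _
    exact OddAux.tree_cross ht hs _ _ _ _
end

section
/- Let G and H be connected graphs, let S_1, …, S_s be pairwise vertex-disjoint trees in G forming, together with a 2-colouring c_G of V(G), an odd expansion of K_s in G, and let T_1, …, T_t be pairwise vertex-disjoint trees in H forming, together with a 2-colouring c_H of V(H), an odd expansion of K_t in H. For each i ∈ {1,…,s} and j ∈ {1,…,t}, let 𝒯_{ij} be a spanning tree of the (connected) Cartesian product S_i □ T_j, and define a 2-colouring c_1 on the union of the vertex sets of all 𝒯_{ij} by c_1((u,v)) = 1 if c_G(u) = c_H(v) and c_1((u,v)) = 2 otherwise. Then c_1 is a proper colouring of each tree 𝒯_{ij}; moreover, for any two distinct pairs (i,j), (i',j') ∈ {1,…,s} × {1,…,t} with i = i' or j = j', there exists an edge of G □ H between 𝒯_{ij}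 and 𝒯_{i'j'} whose two endpoints receive the same colour under c_1. -/
open SimpleGraph

/-- The Cartesian product of a subgraph `A` of `G` and a subgraph `B` of `H`, viewed as a
subgraph of `cartProd G H`. -/
def cartProdSub {α β : Type*} {G : SimpleGraph α} {H : SimpleGraph β}
    (A : G.Subgraph) (B : H.Subgraph) : (cartProd G H).Subgraph where
  verts := A.verts ×ˢ B.verts
  Adj x y := (x.1 = y.1 ∧ x.1 ∈ A.verts ∧ B.Adj x.2 y.2) ∨
    (x.2 = y.2 ∧ x.2 ∈ B.verts ∧ A.Adj x.1 y.1)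
  adj_sub := by
    rintro x y (⟨h1, _, h3⟩ | ⟨h1, _, h3⟩)
    · exact Or.inl ⟨h1, B.adj_sub h3⟩
    · exact Or.inr ⟨h1, A.adj_sub h3⟩
  edge_vert := by
    rintro x y (⟨h1, h2, h3⟩ | ⟨h1, h2, h3⟩)
    · exact ⟨h2, B.edge_vert h3⟩
    · exact ⟨A.edge_vert h3, h2⟩
  symm := by
    constructor
    rintro x y (⟨h1, h2, h3⟩ | ⟨h1, h2, h3⟩)
    · exact Or.inl ⟨h1.symm, h1 ▸ h2, h3.symm⟩
    · exact Or.inr ⟨h1.symm, h1 ▸ h2, h3.symm⟩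

theorem stmt_14 {V W : Type*} [Fintype V] [Fintype W]
    (G : SimpleGraph V) (H : SimpleGraph W)
    (hG : G.Connected) (hH : H.Connected) (s t : ℕ)
    -- an odd expansion of `K_s` in `G`, witnessed by trees `S i` and 2-colouring `cG`
    (S : Fin s → G.Subgraph) (cG : V → Fin 2)
    (hStree : ∀ i, (S i).coe.IsTree)
    (hSdisj : Pairwise fun i i' => Disjoint (S i).verts (S i').verts)
    (hSprop : ∀ i, ∀ x y, (S i).Adj x y → cG x ≠ cG y)
    (hSmono : ∀ i i' : Fin s, i ≠ i' →
      ∃ x y, x ∈ (S i).verts ∧ y ∈ (S i').verts ∧ G.Adj x y ∧ cG x = cG y)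
    -- an odd expansion of `K_t` in `H`, witnessed by trees `T j` and 2-colouring `cH`
    (T : Fin t → H.Subgraph) (cH : W → Fin 2)
    (hTtree : ∀ j, (T j).coe.IsTree)
    (hTdisj : Pairwise fun j j' => Disjoint (T j).verts (T j').verts)
    (hTprop : ∀ j, ∀ x y, (T j).Adj x y → cH x ≠ cH y)
    (hTmono : ∀ j j' : Fin t, j ≠ j' →
      ∃ x y, x ∈ (T j).verts ∧ y ∈ (T j').verts ∧ H.Adj x y ∧ cH x = cH y)
    -- for each `i, j`, a spanning tree `TT i j` of `S i □ T j`
    (TT : Fin s → Fin t → (cartProd G H).Subgraph)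
    (hTTle : ∀ i j, TT i j ≤ cartProdSub (S i) (T j))
    (hTTverts : ∀ i j, (TT i j).verts = (S i).verts ×ˢ (T j).verts)
    (hTTtree : ∀ i j, (TT i j).coe.IsTree)
    -- the 2-colouring `c1`
    (c1 : V × W → Fin 2)
    (hc1 : ∀ p : V × W, c1 p = if cG p.1 = cH p.2 then 0 else 1) :
    (∀ i j, ∀ x y, (TT i j).Adj x y → c1 x ≠ c1 y) ∧
    (∀ i j i' j', (i, j) ≠ (i', j') → (i = i' ∨ j = j') →
      ∃ x y, x ∈ (TT i j).verts ∧ y ∈ (TT i' j').verts ∧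
        (cartProd G H).Adj x y ∧ c1 x = c1 y) := by
  have col1 : ∀ a b c d : Fin 2, a = b → c ≠ d →
      (if a = c then (0 : Fin 2) else 1) ≠ (if b = d then 0 else 1) := by decide
  have col2 : ∀ a b c d : Fin 2, a ≠ b → c = d →
      (if a = c then (0 : Fin 2) else 1) ≠ (if b = d then 0 else 1) := by decide
  constructor
  · intro i j x y hadj
    rw [hc1 x, hc1 y]
    rcases (hTTle i j).2 hadj with ⟨h1, _, h3⟩ | ⟨h1, _, h3⟩
    · exact col1 _ _ _ _ (h1 ▸ rfl) (hTprop j _ _ h3)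
    · exact col2 _ _ _ _ (hSprop i _ _ h3) (h1 ▸ rfl)
  · intro i j i' j' hne hor
    rcases hor with hii | hjj
    · subst hii
      have hjj : j ≠ j' := fun h => hne (by simp [h])
      obtain ⟨y, y', hy, hy', hadj, hcy⟩ := hTmono j j' hjj
      obtain ⟨⟨u, hu⟩⟩ := (hStree i).isConnected.nonempty
      refine ⟨(u, y), (u, y'), ?_, ?_, Or.inl ⟨rfl, hadj⟩, ?_⟩
      · rw [hTTverts]; exact ⟨hu, hy⟩
      · rw [hTTverts]; exact ⟨hu, hy'⟩
      · rw [hc1, hc1]; simp only; rw [hcy]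
    · subst hjj
      have hii : i ≠ i' := fun h => hne (by simp [h])
      obtain ⟨x, x', hx, hx', hadj, hcx⟩ := hSmono i i' hii
      obtain ⟨⟨v, hv⟩⟩ := (hTtree j).isConnected.nonempty
      refine ⟨(x, v), (x', v), ?_, ?_, Or.inr ⟨rfl, hadj⟩, ?_⟩
      · rw [hTTverts]; exact ⟨hx, hv⟩
      · rw [hTTverts]; exact ⟨hx', hv⟩
      · rw [hc1, hc1]; simp only; rw [hcx]
end

section
/- Let G and H be graphs with odd Hadwiger numbers oh(G) = s ≥ 2 and oh(H) = t ≥ 2. Then the odd Hadwiger number of the strong product satisfies oh(G ⊠ H) ≥ oh(K_s ⊠ K_t), and the odd Hadwiger number of the lexicographic product satisfies oh(G ∘ H) ≥ oh(K_s ∘ K_t). -/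
open SimpleGraph

section Comb
variable {α β : Type*} (A : SimpleGraph α) (B : SimpleGraph β) (y0 : β)

/-- Copies of `B` in every column, joined by a copy of `A` along row `y0`. -/
def comb : SimpleGraph (α × β) where
  Adj p q := (p.1 = q.1 ∧ B.Adj p.2 q.2) ∨ (p.2 = q.2 ∧ p.2 = y0 ∧ A.Adj p.1 q.1)
  symm := by
    constructor
    rintro p q (⟨h1, h2⟩ | ⟨h1, h2, h3⟩)
    · exact Or.inl ⟨h1.symm, h2.symm⟩
    · exact Or.inr ⟨h1.symm, h1 ▸ h2, h3.symm⟩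
  loopless := by
    constructor
    rintro p (⟨_, h⟩ | ⟨_, _, h⟩)
    exacts [B.irrefl h, A.irrefl h]

/-- Column embedding hom. -/
def combColHom (a : α) : B →g comb A B y0 :=
  ⟨fun b => (a, b), fun h => Or.inl ⟨rfl, h⟩⟩

/-- Row embedding hom. -/
def combRowHom : A →g comb A B y0 :=
  ⟨fun a => (a, y0), fun h => Or.inr ⟨rfl, rfl, h⟩⟩

variable {A B y0}

lemma comb_connected (hA : A.Connected) (hB : B.Connected) : (comb A B y0).Connected := by
  haveI := hA.nonempty
  haveI := hB.nonempty
  rw [connected_iff]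
  refine ⟨?_, inferInstance⟩
  rintro ⟨a, b⟩ ⟨a', b'⟩
  have r1 : (comb A B y0).Reachable (a, b) (a, y0) :=
    (hB.preconnected b y0).map (combColHom A B y0 a)
  have r2 : (comb A B y0).Reachable (a, y0) (a', y0) :=
    (hA.preconnected a a').map (combRowHom A B y0)
  have r3 : (comb A B y0).Reachable (a', y0) (a', b') :=
    (hB.preconnected y0 b').map (combColHom A B y0 a')
  exact (r1.trans r2).trans r3

lemma comb_acyclic (hA : A.IsAcyclic) (hB : B.IsAcyclic) : (comb A B y0).IsAcyclic := by
  classical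
  rw [isAcyclic_iff_forall_adj_isBridge]
  rintro ⟨a, b⟩ ⟨a', b'⟩ hadj
  rw [isBridge_iff]
  rcases hadj with ⟨h1, h2⟩ | ⟨h1, h2, h3⟩
  · -- vertical edge: a = a', B.Adj b b'
    simp only at h1 h2
    subst h1
    have hb : ¬(B \ fromEdgeSet {s(b, b')}).Reachable b b' :=
      ((isAcyclic_iff_forall_adj_isBridge.1 hB) h2)
    set Q : α × β → Prop :=
      fun p => (B \ fromEdgeSet {s(b, b')}).Reachable b (if p.1 = a then p.2 else y0) with hQ
    have hstep : ∀ p q, ((comb A B y0) \ fromEdgeSet {s((a, b), (a, b'))}).Adj p q →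
        (Q p ↔ Q q) := by
      rintro ⟨x, y⟩ ⟨x', y'⟩ hpq
      rw [sdiff_adj, fromEdgeSet_adj] at hpq
      obtain ⟨hP, hne⟩ := hpq
      have hnP : s((x, y), (x', y')) ≠ s((a, b), (a, b')) := by
        intro hmem
        exact hne ⟨hmem, (comb A B y0).ne_of_adj hP⟩
      rcases hP with ⟨e1, e2⟩ | ⟨e1, e2, e3⟩
      · simp only at e1 e2; subst e1
        by_cases hx : x = a
        · subst hx
          have hne2 : s(y, y') ≠ s(b, b') := by
            intro hs
            apply hnP
            rcases Sym2.eq_iff.1 hs with ⟨rfl, rfl⟩ | ⟨rfl, rfl⟩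
            · rfl
            · rw [Sym2.eq_swap]
          have hadj' : (B \ fromEdgeSet {s(b, b')}).Adj y y' := by
            rw [sdiff_adj, fromEdgeSet_adj]
            exact ⟨e2, fun hc => hne2 hc.1⟩
          simp only [hQ, if_pos rfl]
          exact ⟨fun h => h.trans hadj'.reachable, fun h => h.trans hadj'.symm.reachable⟩
        · simp only [hQ, if_neg hx]
      · simp only at e1 e2 e3
        have hy : (if x = a then y else y0) = y0 := by split <;> simp [e2]
        have hy' : (if x' = a then y' else y0) = y0 := by split <;> simp [← e1, e2]
        simp only [hQ, hy, hy']
    have key : ∀ {p q : α × β},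
        ((comb A B y0) \ fromEdgeSet {s((a, b), (a, b'))}).Walk p q → (Q p ↔ Q q) := by
      intro p q w
      induction w with
      | nil => exact Iff.rfl
      | cons h _ ih => exact (hstep _ _ h).trans ih
    rintro ⟨w⟩
    have hQ1 : Q (a, b) := by
      simp only [hQ, eq_self_iff_true, if_true]
      exact Reachable.rfl
    have hQ2 : Q (a, b') := (key w).1 hQ1
    apply hb
    simpa [hQ] using hQ2
  · -- horizontal edge: b = b' = y0, A.Adj a a'
    simp only at h1 h2 h3
    subst h2
    subst h1
    have ha : ¬(A \ fromEdgeSet {s(a, a')}).Reachable a a' :=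
      ((isAcyclic_iff_forall_adj_isBridge.1 hA) h3)
    set Q : α × β → Prop := fun p => (A \ fromEdgeSet {s(a, a')}).Reachable a p.1 with hQ
    have hstep : ∀ p q, ((comb A B b) \ fromEdgeSet {s((a, b), (a', b))}).Adj p q →
        (Q p ↔ Q q) := by
      rintro ⟨x, y⟩ ⟨x', y'⟩ hpq
      rw [sdiff_adj, fromEdgeSet_adj] at hpq
      obtain ⟨hP, hne⟩ := hpq
      have hnP : s((x, y), (x', y')) ≠ s((a, b), (a', b)) := by
        intro hmem
        exact hne ⟨hmem, (comb A B b).ne_of_adj hP⟩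
      rcases hP with ⟨e1, e2⟩ | ⟨e1, e2, e3⟩
      · simp only at e1; subst e1; simp only [hQ]
      · simp only at e1 e2 e3
        subst e2; subst e1
        have hne2 : s(x, x') ≠ s(a, a') := by
          intro hs
          apply hnP
          rcases Sym2.eq_iff.1 hs with ⟨rfl, rfl⟩ | ⟨rfl, rfl⟩
          · rfl
          · rw [Sym2.eq_swap]
        have hadj' : (A \ fromEdgeSet {s(a, a')}).Adj x x' := by
          rw [sdiff_adj, fromEdgeSet_adj]
          exact ⟨e3, fun hc => hne2 hc.1⟩
        exact ⟨fun h => h.trans hadj'.reachable, fun h => h.trans hadj'.symm.reachable⟩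
    have key : ∀ {p q : α × β},
        ((comb A B b) \ fromEdgeSet {s((a, b), (a', b))}).Walk p q → (Q p ↔ Q q) := by
      intro p q w
      induction w with
      | nil => exact Iff.rfl
      | cons h _ ih => exact (hstep _ _ h).trans ih
    rintro ⟨w⟩
    exact ha ((key w).1 Reachable.rfl)

lemma comb_isTree (hA : A.IsTree) (hB : B.IsTree) : (comb A B y0).IsTree :=
  ⟨comb_connected hA.isConnected hB.isConnected, comb_acyclic hA.IsAcyclic hB.IsAcyclic⟩

end Comb

-- transfer of IsTree along an isomorphism
lemma isTree_of_iso {V V' : Type*} {G : SimpleGraph V} {G' : SimpleGraph V'}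
    (e : G ≃g G') (h : G.IsTree) : G'.IsTree := by
  constructor
  · exact e.connected_iff.1 h.isConnected
  · intro v c hc
    exact h.IsAcyclic (c.map e.symm.toHom) (hc.map e.symm.toEquiv.injective)


section CombSub

variable {V W : Type*} (G : SimpleGraph V) (H : SimpleGraph W)

/-- The comb-shaped subgraph of the strong product built from subgraphs `T` of `G` and
`S` of `H`, with teeth joined along row `y0`. -/
def combSub (T : G.Subgraph) (S : H.Subgraph) (y0 : W) (hy0 : y0 ∈ S.verts) :
    (strongProd G H).Subgraph where
  verts := T.verts ×ˢ S.verts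
  Adj p q := (p.1 = q.1 ∧ p.1 ∈ T.verts ∧ S.Adj p.2 q.2) ∨
    (p.2 = q.2 ∧ p.2 = y0 ∧ T.Adj p.1 q.1)
  adj_sub := by
    rintro p q (⟨h1, _, h3⟩ | ⟨h1, _, h3⟩)
    · exact Or.inl ⟨h1, S.adj_sub h3⟩
    · exact Or.inr (Or.inl ⟨h1, T.adj_sub h3⟩)
  edge_vert := by
    rintro p q (⟨h1, h2, h3⟩ | ⟨h1, h2, h3⟩)
    · exact ⟨h2, S.edge_vert h3⟩
    · refine ⟨T.edge_vert h3, ?_⟩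
      rw [h2]; exact hy0
  symm := by
    constructor
    rintro p q (⟨h1, h2, h3⟩ | ⟨h1, h2, h3⟩)
    · exact Or.inl ⟨h1.symm, h1 ▸ h2, h3.symm⟩
    · exact Or.inr ⟨h1.symm, h1 ▸ h2, h3.symm⟩

variable {G H}

lemma combSub_isTree {T : G.Subgraph} {S : H.Subgraph} {y0 : W} (hy0 : y0 ∈ S.verts)
    (hT : T.coe.IsTree) (hS : S.coe.IsTree) : (combSub G H T S y0 hy0).coe.IsTree := by
  refine isTree_of_iso ?_ (comb_isTree (y0 := (⟨y0, hy0⟩ : S.verts)) hT hS)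
  refine ⟨⟨fun p => ⟨(p.1.1, p.2.1), p.1.2, p.2.2⟩,
    fun p => (⟨p.1.1, p.2.1⟩, ⟨p.1.2, p.2.2⟩), ?_, ?_⟩, ?_⟩
  · rintro ⟨⟨x, hx⟩, ⟨y, hy⟩⟩; rfl
  · rintro ⟨⟨x, y⟩, hx, hy⟩; rfl
  · rintro ⟨⟨x, hx⟩, ⟨y, hy⟩⟩ ⟨⟨x', hx'⟩, ⟨y', hy'⟩⟩
    show (combSub G H T S y0 hy0).Adj (x, y) (x', y') ↔ (comb _ _ _).Adj _ _
    simp only [combSub, comb, Subtype.mk.injEq, Prod.mk.injEq]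
    constructor
    · rintro (⟨h1, _, h3⟩ | ⟨h1, h2, h3⟩)
      · exact Or.inl ⟨h1, h3⟩
      · exact Or.inr ⟨h1, h2, h3⟩
    · rintro (⟨h1, h3⟩ | ⟨h1, h2, h3⟩)
      · exact Or.inl ⟨h1, hx, h3⟩
      · exact Or.inr ⟨h1, h2, h3⟩

end CombSub

section OddMinorLemmas

variable {V : Type*} [Fintype V] {G : SimpleGraph V}

lemma isOddMinorOf_zero (G : SimpleGraph V) : IsOddMinorOf (⊤ : SimpleGraph (Fin 0)) G :=
  ⟨fun w => w.elim0, fun _ => 0, fun w => w.elim0, fun w => w.elim0, fun w => w.elim0,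
    fun w => w.elim0⟩

lemma card_le_of_isOddMinorOf {r : ℕ} (h : IsOddMinorOf (⊤ : SimpleGraph (Fin r)) G) :
    r ≤ Fintype.card V := by
  obtain ⟨T, c, h1, h2, -, -⟩ := h
  have hne : ∀ w, ((T w).verts).Nonempty := fun w =>
    Set.nonempty_coe_sort.1 (h1 w).isConnected.nonempty
  choose f hf using hne
  have hinj : Function.Injective f := by
    intro w w' hww
    by_contra hne'
    exact Set.disjoint_left.1 (h2 hne') (hf w) (hww ▸ hf w')
  simpa using Fintype.card_le_of_injective f hinj

lemma bddAbove_oddMinorSet (G : SimpleGraph V) :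
    BddAbove {r : ℕ | IsOddMinorOf (⊤ : SimpleGraph (Fin r)) G} :=
  ⟨Fintype.card V, fun _ hr => card_le_of_isOddMinorOf hr⟩

lemma isOddMinorOf_oddHadwiger (G : SimpleGraph V) :
    IsOddMinorOf (⊤ : SimpleGraph (Fin (oddHadwiger G))) G :=
  Nat.sSup_mem ⟨0, isOddMinorOf_zero G⟩ (bddAbove_oddMinorSet G)

lemma le_oddHadwiger {r : ℕ} (h : IsOddMinorOf (⊤ : SimpleGraph (Fin r)) G) :
    r ≤ oddHadwiger G :=
  le_csSup (bddAbove_oddMinorSet G) h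

lemma oddHadwiger_le_card (G : SimpleGraph V) : oddHadwiger G ≤ Fintype.card V :=
  csSup_le ⟨0, isOddMinorOf_zero G⟩ fun _ hr => card_le_of_isOddMinorOf hr

/-- Enlarging a subgraph's ambient graph. -/
def subgraphMono {G G' : SimpleGraph V} (hle : G ≤ G') (T : G.Subgraph) : G'.Subgraph where
  verts := T.verts
  Adj := T.Adj
  adj_sub h := hle (T.adj_sub h)
  edge_vert := T.edge_vert
  symm := T.symm

lemma IsOddMinorOf.mono {W : Type*} {K : SimpleGraph W} {G G' : SimpleGraph V}
    (hle : G ≤ G') (h : IsOddMinorOf K G) : IsOddMinorOf K G' := by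
  obtain ⟨T, c, h1, h2, h3, h4⟩ := h
  refine ⟨fun w => subgraphMono hle (T w), c, fun w => h1 w, h2, h3, ?_⟩
  intro w w' hww
  obtain ⟨x, y, hx, hy, hxy, hc⟩ := h4 w w' hww
  exact ⟨x, y, hx, hy, hle hxy, hc⟩

lemma IsOddMinorOf.comap {W W' : Type*} (f : W' ↪ W)
    (h : IsOddMinorOf (⊤ : SimpleGraph W) G) : IsOddMinorOf (⊤ : SimpleGraph W') G := by
  obtain ⟨T, c, h1, h2, h3, h4⟩ := h
  refine ⟨fun w => T (f w), c, fun w => h1 (f w), ?_, fun w => h3 (f w), ?_⟩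
  · intro w w' hww
    exact h2 (f.injective.ne hww)
  · intro w w' hww
    exact h4 (f w) (f w') (by simpa using f.injective.ne (by simpa using hww))

end OddMinorLemmas

lemma strong_oddMinor {V W : Type*} [Fintype V] [Fintype W]
    {G : SimpleGraph V} {H : SimpleGraph W} {s t : ℕ}
    (hG : IsOddMinorOf (⊤ : SimpleGraph (Fin s)) G)
    (hH : IsOddMinorOf (⊤ : SimpleGraph (Fin t)) H) :
    IsOddMinorOf (⊤ : SimpleGraph (Fin s × Fin t)) (strongProd G H) := by
  obtain ⟨T, cG, hT1, hT2, hT3, hT4⟩ := hG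
  obtain ⟨S, cH, hS1, hS2, hS3, hS4⟩ := hH
  have hTne : ∀ i, (T i).verts.Nonempty := fun i =>
    Set.nonempty_coe_sort.1 (hT1 i).isConnected.nonempty
  have hSne : ∀ j, (S j).verts.Nonempty := fun j =>
    Set.nonempty_coe_sort.1 (hS1 j).isConnected.nonempty
  choose y0 hy0 using hSne
  refine ⟨fun p => combSub G H (T p.1) (S p.2) (y0 p.2) (hy0 p.2),
    fun p => cG p.1 + cH p.2, ?_, ?_, ?_, ?_⟩
  · intro p
    exact combSub_isTree (hy0 p.2) (hT1 p.1) (hS1 p.2)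
  · rintro ⟨i, j⟩ ⟨i', j'⟩ hne
    rw [Set.disjoint_left]
    rintro ⟨x, y⟩ ⟨hx, hy⟩ ⟨hx', hy'⟩
    rcases eq_or_ne i i' with rfl | hii
    · have hjj : j ≠ j' := by rintro rfl; exact hne rfl
      exact Set.disjoint_left.1 (hS2 hjj) hy hy'
    · exact Set.disjoint_left.1 (hT2 hii) hx hx'
  · rintro ⟨i, j⟩ ⟨x, y⟩ ⟨x', y'⟩ hadj heq
    rcases hadj with ⟨h1, h2, h3⟩ | ⟨h1, h2, h3⟩
    · simp only at h1 h3
      subst h1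
      exact hS3 j y y' h3 (add_left_cancel heq)
    · simp only at h1 h3
      subst h1
      exact hT3 i x x' h3 (add_right_cancel heq)
  · rintro ⟨i, j⟩ ⟨i', j'⟩ hne
    rw [top_adj] at hne
    rcases eq_or_ne i i' with rfl | hii
    · have hjj : j ≠ j' := by
        rintro rfl; exact hne rfl
      obtain ⟨y, y', hy, hy', hyy, hcy⟩ := hS4 j j' (by simpa using hjj)
      obtain ⟨x, hx⟩ := hTne i
      refine ⟨(x, y), (x, y'), ⟨hx, hy⟩, ⟨hx, hy'⟩, Or.inl ⟨rfl, hyy⟩, ?_⟩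
      show cG x + cH y = cG x + cH y'
      rw [hcy]
    · rcases eq_or_ne j j' with rfl | hjj
      · obtain ⟨x, x', hx, hx', hxx, hcx⟩ := hT4 i i' (by simpa using hii)
        refine ⟨(x, y0 j), (x', y0 j), ⟨hx, hy0 j⟩, ⟨hx', hy0 j⟩,
          Or.inr (Or.inl ⟨rfl, hxx⟩), ?_⟩
        show cG x + cH (y0 j) = cG x' + cH (y0 j)
        rw [hcx]
      · obtain ⟨x, x', hx, hx', hxx, hcx⟩ := hT4 i i' (by simpa using hii)
        obtain ⟨y, y', hy, hy', hyy, hcy⟩ := hS4 j j' (by simpa using hjj)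
        refine ⟨(x, y), (x', y'), ⟨hx, hy⟩, ⟨hx', hy'⟩, Or.inr (Or.inr ⟨hxx, hyy⟩), ?_⟩
        show cG x + cH y = cG x' + cH y'
        rw [hcx, hcy]

lemma strong_le_lex {V W : Type*} {G : SimpleGraph V} {H : SimpleGraph W} :
    strongProd G H ≤ lexProd G H := by
  rintro p q (⟨h1, h2⟩ | ⟨h1, h2⟩ | ⟨h1, h2⟩)
  · exact Or.inr ⟨h1, h2⟩
  · exact Or.inl h2
  · exact Or.inl h1


theorem stmt_16 {V W : Type*} [Fintype V] [Fintype W]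
    (G : SimpleGraph V) (H : SimpleGraph W) (s t : ℕ)
    (hs : oddHadwiger G = s) (hs2 : 2 ≤ s)
    (ht : oddHadwiger H = t) (ht2 : 2 ≤ t) :
    oddHadwiger (strongProd G H) ≥
      oddHadwiger (strongProd (⊤ : SimpleGraph (Fin s)) (⊤ : SimpleGraph (Fin t))) ∧
    oddHadwiger (lexProd G H) ≥
      oddHadwiger (lexProd (⊤ : SimpleGraph (Fin s)) (⊤ : SimpleGraph (Fin t))) := by
  have hGm : IsOddMinorOf (⊤ : SimpleGraph (Fin s)) G := hs ▸ isOddMinorOf_oddHadwiger G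
  have hHm : IsOddMinorOf (⊤ : SimpleGraph (Fin t)) H := ht ▸ isOddMinorOf_oddHadwiger H
  have hstrong : IsOddMinorOf (⊤ : SimpleGraph (Fin (s * t))) (strongProd G H) :=
    IsOddMinorOf.comap finProdFinEquiv.symm.toEmbedding (strong_oddMinor hGm hHm)
  have hlex : IsOddMinorOf (⊤ : SimpleGraph (Fin (s * t))) (lexProd G H) :=
    hstrong.mono strong_le_lex
  have hcard : Fintype.card (Fin s × Fin t) = s * t := by simp
  constructor
  · refine le_trans ?_ (le_oddHadwiger hstrong)
    refine le_trans (oddHadwiger_le_card _) ?_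
    rw [hcard]
  · refine le_trans ?_ (le_oddHadwiger hlex)
    refine le_trans (oddHadwiger_le_card _) ?_
    rw [hcard]
end

section
/- Let G and H be (finite, nonempty) graphs with maximum degrees Δ(G) and Δ(H). If Δ(G) = Δ(H), then the odd Hadwiger number of the lexicographic product satisfies oh(G ∘ H) ≥ Δ(G) + 1; if Δ(G) ≠ Δ(H), then oh(G ∘ H) ≥ min{Δ(G), Δ(H)} + 2. -/
open SimpleGraph

/-! ### Auxiliary lemmas -/

lemma acyclic_of_two_edges {V : Type*} (G : SimpleGraph V) (e1 e2 : Sym2 V)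
    (h : ∀ a b, G.Adj a b → s(a,b) = e1 ∨ s(a,b) = e2) : G.IsAcyclic := by
  classical
  intro v c hc
  have hnd : c.edges.Nodup := hc.edges_nodup
  have hlen : c.edges.length = c.length := c.length_edges
  have h3 := hc.three_le_length
  have hsub : c.edges.toFinset ⊆ {e1, e2} := by
    intro e he
    rw [List.mem_toFinset] at he
    have hmem : e ∈ G.edgeSet := c.edges_subset_edgeSet he
    induction e using Sym2.ind with
    | _ p q =>
      rcases h p q hmem with h' | h' <;> simp [h']
  have hcard : c.edges.toFinset.card = c.edges.length := List.toFinset_card_of_nodup hnd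
  have hle := Finset.card_le_card hsub
  have h2 : ({e1, e2} : Finset (Sym2 V)).card ≤ 2 :=
    (Finset.card_insert_le _ _).trans (by simp)
  omega

lemma singleton_coe_isTree {V : Type*} (G : SimpleGraph V) (v : V) :
    (G.singletonSubgraph v).coe.IsTree := by
  constructor
  · exact (SimpleGraph.Subgraph.singletonSubgraph_connected).coe
  · apply acyclic_of_two_edges _ (s(⟨v, rfl⟩, ⟨v, rfl⟩)) (s(⟨v, rfl⟩, ⟨v, rfl⟩))
    intro a b hab
    exact absurd hab (by simp [SimpleGraph.singletonSubgraph_adj] at *)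

/-- A path subgraph on three vertices `x0 - x1 - x2`. -/
def P3 {V : Type*} (G : SimpleGraph V) {x0 x1 x2 : V}
    (h01 : G.Adj x0 x1) (h12 : G.Adj x1 x2) : G.Subgraph where
  verts := {x0, x1, x2}
  Adj p q := (p = x0 ∧ q = x1) ∨ (p = x1 ∧ q = x0) ∨ (p = x1 ∧ q = x2) ∨ (p = x2 ∧ q = x1)
  adj_sub := by
    rintro p q (⟨rfl, rfl⟩ | ⟨rfl, rfl⟩ | ⟨rfl, rfl⟩ | ⟨rfl, rfl⟩)
    · exact h01
    · exact h01.symm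
    · exact h12
    · exact h12.symm
  edge_vert := by
    rintro p q (⟨rfl, rfl⟩ | ⟨rfl, rfl⟩ | ⟨rfl, rfl⟩ | ⟨rfl, rfl⟩) <;> simp
  symm := by
    constructor
    rintro p q (⟨rfl, rfl⟩ | ⟨rfl, rfl⟩ | ⟨rfl, rfl⟩ | ⟨rfl, rfl⟩) <;> tauto

lemma P3_verts {V : Type*} (G : SimpleGraph V) {x0 x1 x2 : V}
    (h01 : G.Adj x0 x1) (h12 : G.Adj x1 x2) :
    (P3 G h01 h12).verts = {x0, x1, x2} := rfl

lemma P3_adj {V : Type*} (G : SimpleGraph V) {x0 x1 x2 : V}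
    (h01 : G.Adj x0 x1) (h12 : G.Adj x1 x2) (p q : V) :
    (P3 G h01 h12).Adj p q ↔
      (p = x0 ∧ q = x1) ∨ (p = x1 ∧ q = x0) ∨ (p = x1 ∧ q = x2) ∨ (p = x2 ∧ q = x1) :=
  Iff.rfl

lemma P3_isTree {V : Type*} (G : SimpleGraph V) {x0 x1 x2 : V}
    (h01 : G.Adj x0 x1) (h12 : G.Adj x1 x2) :
    (P3 G h01 h12).coe.IsTree := by
  have m0 : x0 ∈ (P3 G h01 h12).verts := by simp [P3_verts]
  have m1 : x1 ∈ (P3 G h01 h12).verts := by simp [P3_verts]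
  have m2 : x2 ∈ (P3 G h01 h12).verts := by simp [P3_verts]
  constructor
  · haveI : Nonempty (P3 G h01 h12).verts := ⟨⟨x1, m1⟩⟩
    apply SimpleGraph.Connected.mk
    have key : ∀ u : (P3 G h01 h12).verts, (P3 G h01 h12).coe.Reachable ⟨x1, m1⟩ u := by
      rintro ⟨u, hu⟩
      rcases hu with rfl | rfl | rfl
      · exact SimpleGraph.Adj.reachable (by exact Or.inr (Or.inl ⟨rfl, rfl⟩))
      · rfl
      · exact SimpleGraph.Adj.reachable (by exact Or.inr (Or.inr (Or.inl ⟨rfl, rfl⟩)))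
    intro u v
    exact (key u).symm.trans (key v)
  · apply acyclic_of_two_edges _ (s(⟨x0, m0⟩, ⟨x1, m1⟩)) (s(⟨x1, m1⟩, ⟨x2, m2⟩))
    rintro ⟨p, hp⟩ ⟨q, hq⟩ (⟨h1, h2⟩ | ⟨h1, h2⟩ | ⟨h1, h2⟩ | ⟨h1, h2⟩)
    · left
      rw [(Subtype.ext h1 : (⟨p, hp⟩ : (P3 G h01 h12).verts) = ⟨x0, m0⟩),
        (Subtype.ext h2 : (⟨q, hq⟩ : (P3 G h01 h12).verts) = ⟨x1, m1⟩)]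
    · left
      rw [(Subtype.ext h1 : (⟨p, hp⟩ : (P3 G h01 h12).verts) = ⟨x1, m1⟩),
        (Subtype.ext h2 : (⟨q, hq⟩ : (P3 G h01 h12).verts) = ⟨x0, m0⟩)]
      exact Sym2.eq_swap
    · right
      rw [(Subtype.ext h1 : (⟨p, hp⟩ : (P3 G h01 h12).verts) = ⟨x1, m1⟩),
        (Subtype.ext h2 : (⟨q, hq⟩ : (P3 G h01 h12).verts) = ⟨x2, m2⟩)]
    · right
      rw [(Subtype.ext h1 : (⟨p, hp⟩ : (P3 G h01 h12).verts) = ⟨x2, m2⟩),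
        (Subtype.ext h2 : (⟨q, hq⟩ : (P3 G h01 h12).verts) = ⟨x1, m1⟩)]
      exact Sym2.eq_swap

lemma master {V W : Type*} (G : SimpleGraph V) (H : SimpleGraph W) (k : ℕ)
    (a : V) (x : W) (b : Fin k → V) (y : Fin k → W)
    (hb : Function.Injective b) (hy : Function.Injective y)
    (hab : ∀ i, G.Adj a (b i)) (hxy : ∀ i, H.Adj x (y i)) :
    IsOddMinorOf (⊤ : SimpleGraph (Option (Fin k))) (lexProd G H) := by
  classical
  have hba : ∀ i, b i ≠ a := fun i => (hab i).ne'
  have hyx : ∀ i, y i ≠ x := fun i => (hxy i).ne'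
  have adj1 : ∀ i, (lexProd G H).Adj (a, y i) (b i, x) := fun i => Or.inl (hab i)
  have adj2 : ∀ i, (lexProd G H).Adj (b i, x) (b i, y i) := fun i => Or.inr ⟨rfl, hxy i⟩
  set c : V × W → Fin 2 :=
    fun p => if p.1 ≠ a ∧ p.2 = x ∧ (∃ i, b i = p.1) then 1 else 0 with hc
  have c0 : ∀ w, c (a, w) = 0 := by intro w; simp [hc]
  have c1 : ∀ i, c (b i, x) = 1 := by
    intro i
    show (if (b i, x).1 ≠ a ∧ (b i, x).2 = x ∧ (∃ j, b j = (b i, x).1) then (1:Fin 2) else 0) = 1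
    exact if_pos ⟨hba i, rfl, ⟨i, rfl⟩⟩
  have c2 : ∀ i j, c (b i, y j) = 0 := by
    intro i j
    show (if (b i, y j).1 ≠ a ∧ (b i, y j).2 = x ∧ (∃ l, b l = (b i, y j).1)
      then (1:Fin 2) else 0) = 0
    exact if_neg (fun h => hyx j h.2.1)
  set T : Option (Fin k) → (lexProd G H).Subgraph :=
    fun w => Option.elim w ((lexProd G H).singletonSubgraph (a, x))
      (fun i => P3 _ (adj1 i) (adj2 i)) with hT
  have v0 : (T none).verts = {(a, x)} := rfl
  have vp : ∀ i, (T (some i)).verts = {(a, y i), (b i, x), (b i, y i)} := fun i => rfl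
  refine ⟨T, c, ?_, ?_, ?_, ?_⟩
  · rintro (_ | i)
    · exact singleton_coe_isTree _ _
    · exact P3_isTree _ (adj1 i) (adj2 i)
  · have D0p : ∀ i, Disjoint (T none).verts (T (some i)).verts := by
      intro i
      rw [v0, vp]
      rw [Set.disjoint_left]
      rintro p rfl (h | h | h)
      · exact hyx i (congrArg Prod.snd h).symm
      · exact hba i (congrArg Prod.fst h).symm
      · exact hba i (congrArg Prod.fst h).symm
    have Dpp : ∀ i j, i ≠ j →
        Disjoint (T (some i)).verts (T (some j)).verts := by
      intro i j hij
      rw [vp, vp]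
      rw [Set.disjoint_left]
      rintro p (rfl | rfl | rfl) (h | h | h) <;>
        first
          | exact hij (hy (congrArg Prod.snd h))
          | exact hij (hb (congrArg Prod.fst h))
          | exact hba _ (congrArg Prod.fst h).symm
          | exact hba _ (congrArg Prod.fst h)
          | exact hyx _ (congrArg Prod.snd h).symm
          | exact hyx _ (congrArg Prod.snd h)
    rintro (_ | i) (_ | j) hne
    · exact absurd rfl hne
    · exact D0p j
    · exact (D0p i).symm
    · exact Dpp i j (by rintro rfl; exact hne rfl)
  · rintro (_ | i) p q hpq
    · simp [hT] at hpq
    · rw [show T (some i) = P3 _ (adj1 i) (adj2 i) from rfl, P3_adj] at hpq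
      rcases hpq with ⟨rfl, rfl⟩ | ⟨rfl, rfl⟩ | ⟨rfl, rfl⟩ | ⟨rfl, rfl⟩ <;>
        simp [c0, c1, c2]
  · rintro (_ | i) (_ | j) hne
    · simp at hne
    · exact ⟨(a, x), (a, y j), rfl, by simp [vp], Or.inr ⟨rfl, hxy j⟩, by rw [c0, c0]⟩
    · exact ⟨(a, y i), (a, x), by simp [vp], rfl, Or.inr ⟨rfl, (hxy i).symm⟩, by rw [c0, c0]⟩
    · exact ⟨(b i, y i), (a, y j), by simp [vp], by simp [vp], Or.inl (hab i).symm,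
        by rw [c2, c0]⟩

lemma masterZ {V W : Type*} (G : SimpleGraph V) (H : SimpleGraph W) (k : ℕ)
    (a : V) (x : W) (b : Fin k → V) (y : Fin k → W)
    (hb : Function.Injective b) (hy : Function.Injective y)
    (hab : ∀ i, G.Adj a (b i)) (hxy : ∀ i, H.Adj x (y i))
    (z : V × W)
    (hz1 : z ≠ (a, x)) (hz2 : ∀ i, z ≠ (a, y i) ∧ z ≠ (b i, x) ∧ z ≠ (b i, y i))
    (hz3 : z.1 = a ∨ ∀ i, b i ≠ z.1)
    (hz4 : (lexProd G H).Adj z (a, x))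
    (hz5 : ∀ i, (lexProd G H).Adj z (a, y i) ∨ (lexProd G H).Adj z (b i, y i)) :
    IsOddMinorOf (⊤ : SimpleGraph (Option (Option (Fin k)))) (lexProd G H) := by
  classical
  have hba : ∀ i, b i ≠ a := fun i => (hab i).ne'
  have hyx : ∀ i, y i ≠ x := fun i => (hxy i).ne'
  have adj1 : ∀ i, (lexProd G H).Adj (a, y i) (b i, x) := fun i => Or.inl (hab i)
  have adj2 : ∀ i, (lexProd G H).Adj (b i, x) (b i, y i) := fun i => Or.inr ⟨rfl, hxy i⟩
  set c : V × W → Fin 2 :=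
    fun p => if p.1 ≠ a ∧ p.2 = x ∧ (∃ i, b i = p.1) then 1 else 0 with hc
  have c0 : ∀ w, c (a, w) = 0 := by intro w; simp [hc]
  have c1 : ∀ i, c (b i, x) = 1 := by
    intro i
    show (if (b i, x).1 ≠ a ∧ (b i, x).2 = x ∧ (∃ j, b j = (b i, x).1) then (1:Fin 2) else 0) = 1
    exact if_pos ⟨hba i, rfl, ⟨i, rfl⟩⟩
  have c2 : ∀ i j, c (b i, y j) = 0 := by
    intro i j
    show (if (b i, y j).1 ≠ a ∧ (b i, y j).2 = x ∧ (∃ l, b l = (b i, y j).1)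
      then (1:Fin 2) else 0) = 0
    exact if_neg (fun h => hyx j h.2.1)
  have cz : c z = 0 := by
    show (if z.1 ≠ a ∧ z.2 = x ∧ (∃ l, b l = z.1) then (1:Fin 2) else 0) = 0
    refine if_neg ?_
    rintro ⟨h1, -, j, h3⟩
    rcases hz3 with h | h
    · exact h1 h
    · exact h j h3
  set T : Option (Option (Fin k)) → (lexProd G H).Subgraph :=
    fun w => Option.elim w ((lexProd G H).singletonSubgraph z)
      (fun w' => Option.elim w' ((lexProd G H).singletonSubgraph (a, x))
        (fun i => P3 _ (adj1 i) (adj2 i))) with hT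
  have vz : (T none).verts = {z} := rfl
  have v0 : (T (some none)).verts = {(a, x)} := rfl
  have vp : ∀ i, (T (some (some i))).verts = {(a, y i), (b i, x), (b i, y i)} := fun i => rfl
  refine ⟨T, c, ?_, ?_, ?_, ?_⟩
  · rintro (_ | _ | i)
    · exact singleton_coe_isTree _ _
    · exact singleton_coe_isTree _ _
    · exact P3_isTree _ (adj1 i) (adj2 i)
  · -- pairwise disjoint
    have Dz0 : Disjoint (T none).verts (T (some none)).verts := by
      rw [vz, v0]
      simp [Set.disjoint_singleton, hz1]
    have Dzp : ∀ i, Disjoint (T none).verts (T (some (some i))).verts := by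
      intro i
      rw [vz, vp]
      rw [Set.disjoint_left]
      rintro p rfl (h | h | h)
      · exact (hz2 i).1 h
      · exact (hz2 i).2.1 h
      · exact (hz2 i).2.2 h
    have D0p : ∀ i, Disjoint (T (some none)).verts (T (some (some i))).verts := by
      intro i
      rw [v0, vp]
      rw [Set.disjoint_left]
      rintro p rfl (h | h | h)
      · exact hyx i (congrArg Prod.snd h).symm
      · exact hba i (congrArg Prod.fst h).symm
      · exact hba i (congrArg Prod.fst h).symm
    have Dpp : ∀ i j, i ≠ j →
        Disjoint (T (some (some i))).verts (T (some (some j))).verts := by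
      intro i j hij
      rw [vp, vp]
      rw [Set.disjoint_left]
      rintro p (rfl | rfl | rfl) (h | h | h) <;>
        first
          | exact hij (hy (congrArg Prod.snd h))
          | exact hij (hb (congrArg Prod.fst h))
          | exact hba _ (congrArg Prod.fst h).symm
          | exact hba _ (congrArg Prod.fst h)
          | exact hyx _ (congrArg Prod.snd h).symm
          | exact hyx _ (congrArg Prod.snd h)
    rintro (_ | _ | i) (_ | _ | j) hne
    · exact absurd rfl hne
    · exact Dz0
    · exact Dzp j
    · exact Dz0.symm
    · exact absurd rfl hne
    · exact D0p j
    · exact (Dzp i).symm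
    · exact (D0p i).symm
    · exact Dpp i j (by rintro rfl; exact hne rfl)
  · -- proper colouring on trees
    rintro (_ | _ | i) p q hpq
    · simp [hT] at hpq
    · simp [hT] at hpq
    · rw [show T (some (some i)) = P3 _ (adj1 i) (adj2 i) from rfl, P3_adj] at hpq
      rcases hpq with ⟨rfl, rfl⟩ | ⟨rfl, rfl⟩ | ⟨rfl, rfl⟩ | ⟨rfl, rfl⟩ <;>
        simp [c0, c1, c2]
  · -- monochromatic edges between trees
    rintro (_ | _ | i) (_ | _ | j) hne
    · simp at hne
    · exact ⟨z, (a, x), rfl, rfl, hz4, by rw [cz, c0]⟩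
    · rcases hz5 j with h | h
      · exact ⟨z, (a, y j), rfl, by simp [vp], h, by rw [cz, c0]⟩
      · exact ⟨z, (b j, y j), rfl, by simp [vp], h, by rw [cz, c2]⟩
    · exact ⟨(a, x), z, rfl, rfl, hz4.symm, by rw [cz, c0]⟩
    · simp at hne
    · exact ⟨(a, x), (a, y j), rfl, by simp [vp], Or.inr ⟨rfl, hxy j⟩, by rw [c0, c0]⟩
    · rcases hz5 i with h | h
      · exact ⟨(a, y i), z, by simp [vp], rfl, h.symm, by rw [cz, c0]⟩
      · exact ⟨(b i, y i), z, by simp [vp], rfl, h.symm, by rw [cz, c2]⟩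
    · exact ⟨(a, y i), (a, x), by simp [vp], rfl, Or.inr ⟨rfl, (hxy i).symm⟩, by rw [c0, c0]⟩
    · exact ⟨(b i, y i), (a, y j), by simp [vp], by simp [vp], Or.inl (hab i).symm,
        by rw [c2, c0]⟩

lemma oddMinor_reindex {A B V' : Type*} {G : SimpleGraph V'} (e : A ≃ B)
    (h : IsOddMinorOf (⊤ : SimpleGraph B) G) : IsOddMinorOf (⊤ : SimpleGraph A) G := by
  obtain ⟨T, c, h1, h2, h3, h4⟩ := h
  refine ⟨fun w => T (e w), c, fun w => h1 _,
    fun w w' hne => h2 (e.injective.ne hne), fun w => h3 _,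
    fun w w' hadj => h4 _ _ ?_⟩
  have hne : w ≠ w' := by simpa using hadj
  simpa using e.injective.ne hne

lemma oddHadwiger_ge {V' : Type*} [Fintype V'] (G : SimpleGraph V') (r : ℕ)
    (h : IsOddMinorOf (⊤ : SimpleGraph (Fin r)) G) : r ≤ oddHadwiger G := by
  apply le_csSup
  · refine ⟨Fintype.card V', ?_⟩
    rintro s ⟨T, c, htree, hdisj, -, -⟩
    have hne : ∀ i : Fin s, ∃ v, v ∈ (T i).verts := by
      intro i
      obtain ⟨⟨v, hv⟩⟩ := (htree i).isConnected.nonempty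
      exact ⟨v, hv⟩
    choose f hf using hne
    have hinj : Function.Injective f := by
      intro i j hij
      by_contra hne'
      exact Set.disjoint_left.1 (hdisj hne') (hf i) (hij ▸ hf j)
    simpa using Fintype.card_le_of_injective f hinj
  · exact h

lemma exists_star {V' : Type*} [Fintype V'] [Nonempty V'] (G : SimpleGraph V')
    [DecidableRel G.Adj] (k : ℕ) (hk : k ≤ G.maxDegree) :
    ∃ (a : V') (b : Fin k → V'), Function.Injective b ∧ ∀ i, G.Adj a (b i) := by
  obtain ⟨v, hv⟩ := G.exists_maximal_degree_vertex
  have hcard : k ≤ (G.neighborFinset v).card := by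
    rw [card_neighborFinset_eq_degree, ← hv]; exact hk
  refine ⟨v, fun i => ((G.neighborFinset v).equivFin.symm (Fin.castLE hcard i) : _), ?_, ?_⟩
  · intro i j hij
    exact Fin.castLE_injective hcard
      ((G.neighborFinset v).equivFin.symm.injective (Subtype.ext hij))
  · intro i
    have := ((G.neighborFinset v).equivFin.symm (Fin.castLE hcard i)).2
    rwa [mem_neighborFinset] at this

theorem stmt_17 {V W : Type*} [Fintype V] [Fintype W] [Nonempty V] [Nonempty W]
    (G : SimpleGraph V) (H : SimpleGraph W)
    [DecidableRel G.Adj] [DecidableRel H.Adj] :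
    (G.maxDegree = H.maxDegree → oddHadwiger (lexProd G H) ≥ G.maxDegree + 1) ∧
    (G.maxDegree ≠ H.maxDegree →
      oddHadwiger (lexProd G H) ≥ min G.maxDegree H.maxDegree + 2) := by
  constructor
  · intro heq
    obtain ⟨a, b, hb, hab⟩ := exists_star G G.maxDegree le_rfl
    obtain ⟨x, y, hy, hxy⟩ := exists_star H G.maxDegree (le_of_eq heq)
    exact oddHadwiger_ge _ _ (oddMinor_reindex (finSuccEquiv G.maxDegree)
      (master G H G.maxDegree a x b y hb hy hab hxy))
  · intro hne
    rcases lt_or_gt_of_ne hne with hlt | hlt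
    · obtain ⟨a, b, hb, hab⟩ := exists_star G G.maxDegree le_rfl
      obtain ⟨x, y, hy, hxy⟩ := exists_star H (G.maxDegree + 1) (Nat.succ_le_of_lt hlt)
      have key := masterZ G H G.maxDegree a x b (fun i => y i.castSucc)
        hb (fun i j hij => Fin.castSucc_injective _ (hy hij))
        hab (fun i => hxy _)
        (a, y (Fin.last G.maxDegree))
        (fun h => (hxy (Fin.last G.maxDegree)).ne' (congrArg Prod.snd h))
        (fun i => ⟨fun h => (Fin.castSucc_lt_last i).ne' (hy (congrArg Prod.snd h)),
          fun h => (hab i).ne (congrArg Prod.fst h),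
          fun h => (hab i).ne (congrArg Prod.fst h)⟩)
        (Or.inl rfl)
        (Or.inr ⟨rfl, (hxy (Fin.last G.maxDegree)).symm⟩)
        (fun i => Or.inr (Or.inl (hab i)))
      rw [min_eq_left hlt.le]
      exact oddHadwiger_ge _ _ (oddMinor_reindex
        ((finSuccEquiv (G.maxDegree + 1)).trans (finSuccEquiv G.maxDegree).optionCongr) key)
    · obtain ⟨a, b, hb, hab⟩ := exists_star G (H.maxDegree + 1) (Nat.succ_le_of_lt hlt)
      obtain ⟨x, y, hy, hxy⟩ := exists_star H H.maxDegree le_rfl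
      have key := masterZ G H H.maxDegree a x (fun i => b i.castSucc) y
        (fun i j hij => Fin.castSucc_injective _ (hb hij)) hy
        (fun i => hab _) hxy
        (b (Fin.last H.maxDegree), x)
        (fun h => (hab (Fin.last H.maxDegree)).ne' (congrArg Prod.fst h))
        (fun i => ⟨fun h => (hab (Fin.last H.maxDegree)).ne' (congrArg Prod.fst h),
          fun h => (Fin.castSucc_lt_last i).ne' (hb (congrArg Prod.fst h)),
          fun h => (Fin.castSucc_lt_last i).ne' (hb (congrArg Prod.fst h))⟩)
        (Or.inr (fun i h => (Fin.castSucc_lt_last i).ne (hb h)))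
        (Or.inl (hab (Fin.last H.maxDegree)).symm)
        (fun i => Or.inl (Or.inl (hab (Fin.last H.maxDegree)).symm))
      rw [min_eq_right hlt.le]
      exact oddHadwiger_ge _ _ (oddMinor_reindex
        ((finSuccEquiv (H.maxDegree + 1)).trans (finSuccEquiv H.maxDegree).optionCongr) key)
end
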